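/- arXiv:2410.07411 — 5 statements merged into one kernel-verified Lean document; each statement's English description precedes it below -/
import Mathlib

section
/- In a partial cube, the Djoković–Winkler relation Θ is an equivalence relation on the edge set, and the isometric dimension of the partial cube equals the number of Θ-classes. -/
open SimpleGraph

/-- `f` is an isometric embedding of `G` into the hypercube `Q_n`
(whose graph distance is the Hamming distance on binary strings of length `n`). -/
def IsIsomEmb {V : Type} (G : SimpleGraph V) (n : ℕ) (f : V → Fin n → Bool) : Prop :=
  ∀ u v : V, hammingDist (f u) (f v) = G.dist u v

/-- The isometric dimension: the least `n` such that `G` embeds isometrically into `Q_n`. -/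
noncomputable def idim {V : Type} (G : SimpleGraph V) : ℕ :=
  sInf {n | ∃ f : V → Fin n → Bool, IsIsomEmb G n f}

/-- The Djoković–Winkler relation Θ on (potential) edges of `G`. -/
def Theta {V : Type} (G : SimpleGraph V) (e f : Sym2 V) : Prop :=
  ∃ x1 x2 y1 y2 : V, e = s(x1, x2) ∧ f = s(y1, y2) ∧
    G.dist x1 y1 + G.dist x2 y2 ≠ G.dist x1 y2 + G.dist x2 y1

section Aux

set_option linter.unusedSectionVars false

lemma bool_eq : ∀ p q r s : Bool, p = q ∨ r = s →
    ((if p ≠ r then 1 else 0) + (if q ≠ s then 1 else 0) : ℕ)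
      = (if p ≠ s then 1 else 0) + (if q ≠ r then 1 else 0) := by decide

lemma bool_ne : ∀ p q r s : Bool, p ≠ q → r ≠ s →
    ((if p ≠ r then 1 else 0) + (if q ≠ s then 1 else 0) : ℕ)
      ≠ (if p ≠ s then 1 else 0) + (if q ≠ r then 1 else 0) := by decide

variable {V : Type} [Fintype V] [DecidableEq V] {G : SimpleGraph V} {n : ℕ}
  {f : V → Fin n → Bool}

lemma dist_eq_sum (hf : IsIsomEmb G n f) (u v : V) :
    G.dist u v = ∑ k : Fin n, (if f u k ≠ f v k then 1 else 0) := by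
  rw [← hf u v]
  unfold hammingDist
  rw [Finset.card_filter]

lemma exists_flip (hf : IsIsomEmb G n f) {u v : V} (h : G.Adj u v) :
    ∃ i : Fin n, ∀ k, f u k ≠ f v k ↔ k = i := by
  have h1 : hammingDist (f u) (f v) = 1 := by
    rw [hf u v]; exact SimpleGraph.dist_eq_one_iff_adj.mpr h
  unfold hammingDist at h1
  rw [Finset.card_eq_one] at h1
  obtain ⟨i, hi⟩ := h1
  refine ⟨i, fun k => ?_⟩
  constructor
  · intro hk
    have hmem : k ∈ Finset.univ.filter (fun k => f u k ≠ f v k) := by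
      simpa using hk
    rw [hi] at hmem
    simpa using hmem
  · rintro rfl
    have hmem : k ∈ Finset.univ.filter (fun m => f u m ≠ f v m) := by
      rw [hi]; exact Finset.mem_singleton_self k
    simpa using hmem

lemma key (hf : IsIsomEmb G n f) {x1 x2 y1 y2 : V} {i j : Fin n}
    (hi : ∀ k, f x1 k ≠ f x2 k ↔ k = i) (hj : ∀ k, f y1 k ≠ f y2 k ↔ k = j) :
    (G.dist x1 y1 + G.dist x2 y2 ≠ G.dist x1 y2 + G.dist x2 y1) ↔ i = j := by
  rw [dist_eq_sum hf, dist_eq_sum hf, dist_eq_sum hf, dist_eq_sum hf,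
    ← Finset.sum_add_distrib, ← Finset.sum_add_distrib]
  constructor
  · intro hne
    by_contra hij
    apply hne
    refine Finset.sum_congr rfl fun k _ => ?_
    apply bool_eq
    by_cases hk : k = i
    · right
      exact not_ne_iff.mp (fun h => hij (hk.symm.trans ((hj k).mp h)))
    · left
      exact not_ne_iff.mp (fun h => hk ((hi k).mp h))
  · rintro rfl hEq
    have h1 : ((if f x1 i ≠ f y1 i then 1 else 0) + (if f x2 i ≠ f y2 i then 1 else 0))
        + ∑ k ∈ Finset.univ.erase i,
            ((if f x1 k ≠ f y1 k then 1 else 0) + (if f x2 k ≠ f y2 k then 1 else 0))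
        = ∑ k : Fin n, ((if f x1 k ≠ f y1 k then 1 else 0) + (if f x2 k ≠ f y2 k then 1 else 0)) :=
      Finset.add_sum_erase Finset.univ
        (fun k => (if f x1 k ≠ f y1 k then 1 else 0) + (if f x2 k ≠ f y2 k then 1 else 0))
        (Finset.mem_univ i)
    have h2 : ((if f x1 i ≠ f y2 i then 1 else 0) + (if f x2 i ≠ f y1 i then 1 else 0))
        + ∑ k ∈ Finset.univ.erase i,
            ((if f x1 k ≠ f y2 k then 1 else 0) + (if f x2 k ≠ f y1 k then 1 else 0))
        = ∑ k : Fin n, ((if f x1 k ≠ f y2 k then 1 else 0) + (if f x2 k ≠ f y1 k then 1 else 0)) :=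
      Finset.add_sum_erase Finset.univ
        (fun k => (if f x1 k ≠ f y2 k then 1 else 0) + (if f x2 k ≠ f y1 k then 1 else 0))
        (Finset.mem_univ i)
    have hrest : ∑ k ∈ Finset.univ.erase i,
        ((if f x1 k ≠ f y1 k then 1 else 0) + (if f x2 k ≠ f y2 k then 1 else 0))
        = ∑ k ∈ Finset.univ.erase i,
        ((if f x1 k ≠ f y2 k then 1 else 0) + (if f x2 k ≠ f y1 k then 1 else 0)) := by
      refine Finset.sum_congr rfl fun k hk => ?_
      have hki : k ≠ i := Finset.ne_of_mem_erase hk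
      exact bool_eq _ _ _ _ (Or.inl (not_ne_iff.mp (fun h => hki ((hi k).mp h))))
    have hpt := bool_ne (f x1 i) (f x2 i) (f y1 i) (f y2 i)
      ((hi i).mpr rfl) ((hj i).mpr rfl)
    rw [← h1, ← h2] at hEq
    omega

lemma flip_iff_of_sym2_eq {x1 x2 a1 a2 : V} (h : s(x1, x2) = s(a1, a2)) {i : Fin n}
    (hi : ∀ k, f x1 k ≠ f x2 k ↔ k = i) : ∀ k, f a1 k ≠ f a2 k ↔ k = i := by
  rw [Sym2.eq_iff] at h
  rcases h with ⟨rfl, rfl⟩ | ⟨rfl, rfl⟩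
  · exact hi
  · intro k; rw [ne_comm]; exact hi k

lemma theta_iff (hf : IsIsomEmb G n f) {x1 x2 y1 y2 : V} {i j : Fin n}
    (hi : ∀ k, f x1 k ≠ f x2 k ↔ k = i) (hj : ∀ k, f y1 k ≠ f y2 k ↔ k = j) :
    Theta G s(x1, x2) s(y1, y2) ↔ i = j := by
  constructor
  · rintro ⟨a1, a2, b1, b2, ha, hb, hne⟩
    exact (key hf (flip_iff_of_sym2_eq ha hi) (flip_iff_of_sym2_eq hb hj)).mp hne
  · intro hij
    exact ⟨x1, x2, y1, y2, rfl, rfl, (key hf hi hj).mpr hij⟩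

lemma edge_flip (hf : IsIsomEmb G n f) {e : Sym2 V} (he : e ∈ G.edgeSet) :
    ∃ u : V, ∃ v : V, ∃ i : Fin n, e = s(u, v) ∧ G.Adj u v ∧ (∀ k, f u k ≠ f v k ↔ k = i) := by
  induction e using Sym2.ind with
  | _ u v =>
    rw [SimpleGraph.mem_edgeSet] at he
    obtain ⟨i, hi⟩ := exists_flip hf he
    exact ⟨u, v, i, rfl, he, hi⟩

lemma drop (hconn : G.Connected) {m : ℕ} {f' : V → Fin (m + 1) → Bool}
    (hf : IsIsomEmb G (m + 1) f') (i : Fin (m + 1))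
    (hi : ∀ u v : V, G.Adj u v → f' u i = f' v i) :
    ∃ g : V → Fin m → Bool, IsIsomEmb G m g := by
  have hconst : ∀ u v : V, f' u i = f' v i := by
    intro u v
    obtain ⟨p⟩ := hconn u v
    induction p with
    | nil => rfl
    | cons h p ih => exact (hi _ _ h).trans ih
  refine ⟨fun u j => f' u (i.succAbove j), fun u v => ?_⟩
  rw [← hf u v]
  unfold hammingDist
  rw [Finset.card_filter, Finset.card_filter,
    Fin.sum_univ_succAbove (fun k => if f' u k ≠ f' v k then 1 else 0) i]
  simp [hconst u v]

lemma drop' (hconn : G.Connected) (hf : IsIsomEmb G n f) (i : Fin n)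
    (hi : ∀ u v : V, G.Adj u v → f u i = f v i) :
    ∃ g : V → Fin (n - 1) → Bool, IsIsomEmb G (n - 1) g := by
  obtain ⟨m, rfl⟩ : ∃ m, n = m + 1 := ⟨n - 1, by have := i.pos; omega⟩
  exact drop hconn hf i hi

end Aux

/-- In a partial cube, the relation Θ is an equivalence relation on the edge set,
and the isometric dimension equals the number of Θ-classes. -/
theorem stmt2 {V : Type} [Fintype V] [DecidableEq V] (G : SimpleGraph V)
    (hconn : G.Connected) (hpc : ∃ n f, IsIsomEmb G n f) :
    (∀ e ∈ G.edgeSet, Theta G e e) ∧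
    (∀ e ∈ G.edgeSet, ∀ f ∈ G.edgeSet, Theta G e f → Theta G f e) ∧
    (∀ e ∈ G.edgeSet, ∀ f ∈ G.edgeSet, ∀ g ∈ G.edgeSet,
      Theta G e f → Theta G f g → Theta G e g) ∧
    idim G = {C : Set (Sym2 V) |
      ∃ e ∈ G.edgeSet, C = {f | f ∈ G.edgeSet ∧ Theta G e f}}.ncard := by
  obtain ⟨n0, f0, hf0⟩ := hpc
  refine ⟨?_, ?_, ?_, ?_⟩
  · -- reflexivity
    intro e he
    induction e using Sym2.ind with
    | _ u v =>
      rw [SimpleGraph.mem_edgeSet] at he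
      have h1 : G.dist u v = 1 := SimpleGraph.dist_eq_one_iff_adj.mpr he
      have h2 : G.dist v u = 1 := SimpleGraph.dist_eq_one_iff_adj.mpr he.symm
      refine ⟨u, v, u, v, rfl, rfl, ?_⟩
      rw [SimpleGraph.dist_self, SimpleGraph.dist_self, h1, h2]
      omega
  · -- symmetry
    rintro e - f' - ⟨x1, x2, y1, y2, he, hfe, hne⟩
    refine ⟨y1, y2, x1, x2, hfe, he, ?_⟩
    rw [SimpleGraph.dist_comm (u := y1) (v := x1), SimpleGraph.dist_comm (u := y2) (v := x2),
      SimpleGraph.dist_comm (u := y1) (v := x2), SimpleGraph.dist_comm (u := y2) (v := x1)]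
    omega
  · -- transitivity
    intro e he f' hf' g hg h1 h2
    obtain ⟨u1, u2, i, rfl, -, hi⟩ := edge_flip hf0 he
    obtain ⟨v1, v2, j, rfl, -, hj⟩ := edge_flip hf0 hf'
    obtain ⟨w1, w2, k, rfl, -, hk⟩ := edge_flip hf0 hg
    exact (theta_iff hf0 hi hk).mpr
      (((theta_iff hf0 hi hj).mp h1).trans ((theta_iff hf0 hj hk).mp h2))
  · -- dimension
    by_cases hE : G.edgeSet.Nonempty
    · have hsetne : {m | ∃ g : V → Fin m → Bool, IsIsomEmb G m g}.Nonempty := ⟨n0, f0, hf0⟩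
      have hmem : ∃ g : V → Fin (idim G) → Bool, IsIsomEmb G (idim G) g :=
        Nat.sInf_mem hsetne
      obtain ⟨f, hf⟩ := hmem
      -- every coordinate is flipped by some edge
      have hsurj : ∀ i : Fin (idim G), ∃ u v : V, G.Adj u v ∧ f u i ≠ f v i := by
        by_contra hcon
        push_neg at hcon
        obtain ⟨i, hi⟩ := hcon
        obtain ⟨g, hg⟩ := drop' hconn hf i hi
        have hle : idim G ≤ idim G - 1 := Nat.sInf_le ⟨g, hg⟩
        have := i.pos
        omega
      -- the class of an edge with flip coordinate i
      have classEq : ∀ (u v : V) (i : Fin (idim G)), G.Adj u v →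
          (∀ k, f u k ≠ f v k ↔ k = i) →
          {f' | f' ∈ G.edgeSet ∧ Theta G s(u, v) f'}
            = {e | e ∈ G.edgeSet ∧ ∃ a b : V, e = s(a, b) ∧ f a i ≠ f b i} := by
        intro u v i huv hi
        ext e'
        constructor
        · rintro ⟨he', ht⟩
          obtain ⟨a, b, j, rfl, -, hj⟩ := edge_flip hf he'
          have hij : i = j := (theta_iff hf hi hj).mp ht
          exact ⟨he', a, b, rfl, (hj i).mpr hij⟩
        · rintro ⟨he', a, b, hab, hfab⟩
          obtain ⟨a', b', j, he'', -, hj⟩ := edge_flip hf he'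
          have hj' := flip_iff_of_sym2_eq (he''.symm.trans hab) hj
          have hij : i = j := (hj' i).mp hfab
          refine ⟨he', ?_⟩
          rw [he'']
          exact (theta_iff hf hi hj).mpr hij
      set Φ : Fin (idim G) → Set (Sym2 V) :=
        fun i => {e | e ∈ G.edgeSet ∧ ∃ a b : V, e = s(a, b) ∧ f a i ≠ f b i} with hΦ
      have hrange : {C : Set (Sym2 V) |
          ∃ e ∈ G.edgeSet, C = {f' | f' ∈ G.edgeSet ∧ Theta G e f'}} = Set.range Φ := by
        ext C
        constructor
        · rintro ⟨e, he, rfl⟩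
          obtain ⟨u, v, i, rfl, huv, hi⟩ := edge_flip hf he
          exact ⟨i, (classEq u v i huv hi).symm⟩
        · rintro ⟨i, rfl⟩
          obtain ⟨u, v, huv, hne⟩ := hsurj i
          obtain ⟨j, hj⟩ := exists_flip hf huv
          have hij : i = j := (hj i).mp hne
          subst hij
          exact ⟨s(u, v), (G.mem_edgeSet).mpr huv, (classEq u v i huv hj).symm⟩
      have hinj : Function.Injective Φ := by
        intro i j hij
        obtain ⟨u, v, huv, hne⟩ := hsurj i
        have h1 : s(u, v) ∈ Φ i := ⟨(G.mem_edgeSet).mpr huv, u, v, rfl, hne⟩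
        rw [hij] at h1
        obtain ⟨-, a, b, hab, hfab⟩ := h1
        obtain ⟨k, hk⟩ := exists_flip hf huv
        have hk' := flip_iff_of_sym2_eq hab hk
        exact ((hk i).mp hne).trans ((hk' j).mp hfab).symm
      rw [hrange, ← Set.image_univ, Set.ncard_image_of_injective _ hinj,
        Set.ncard_univ, Nat.card_eq_fintype_card, Fintype.card_fin]
    · rw [Set.not_nonempty_iff_eq_empty] at hE
      have hsub : ∀ u v : V, u = v := by
        intro u v
        obtain ⟨p⟩ := hconn u v
        cases p with
        | nil => rfl
        | cons h p =>
          have : s(u, _) ∈ G.edgeSet := (G.mem_edgeSet).mpr h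
          rw [hE] at this
          exact this.elim
      have h0 : IsIsomEmb G 0 (fun _ x => x.elim0) := by
        intro u v
        rw [hsub u v]
        simp [SimpleGraph.dist_self]
      have hid : idim G = 0 := Nat.sInf_eq_zero.mpr (Or.inl ⟨_, h0⟩)
      have hSempty : {C : Set (Sym2 V) |
          ∃ e ∈ G.edgeSet, C = {f' | f' ∈ G.edgeSet ∧ Theta G e f'}} = ∅ := by
        ext C
        simp [hE]
      rw [hid, hSempty, Set.ncard_empty]
end

section
/- Every median graph is a partial cube, i.e., it embeds isometrically into a hypercube. -/
open SimpleGraph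

/-- The interval `I(u,v)`: vertices lying on some shortest `u`–`v` path. -/
def interval {V : Type} (G : SimpleGraph V) (u v : V) : Set V :=
  {w | G.dist u w + G.dist w v = G.dist u v}

/-- A median graph: a connected graph in which every triple of vertices has a
unique vertex in the intersection of the three pairwise intervals. -/
def IsMedianGraph {V : Type} (G : SimpleGraph V) : Prop :=
  G.Connected ∧ ∀ x y z : V,
    ∃! m : V, m ∈ interval G x y ∩ interval G y z ∩ interval G x z

namespace MedianPC

variable {V : Type} {G : SimpleGraph V}

/-- reshaped median hypothesis -/
def Med (G : SimpleGraph V) : Prop :=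
  ∀ x y z : V, ∃! m : V,
    (G.dist x m + G.dist m y = G.dist x y) ∧
    (G.dist y m + G.dist m z = G.dist y z) ∧
    (G.dist x m + G.dist m z = G.dist x z)

lemma med_of (h : ∀ x y z : V,
    ∃! m : V, m ∈ interval G x y ∩ interval G y z ∩ interval G x z) : Med G := by
  intro x y z
  obtain ⟨m, hm, hu⟩ := h x y z
  obtain ⟨⟨h1, h2⟩, h3⟩ := hm
  exact ⟨m, ⟨h1, h2, h3⟩, fun c hc => hu c ⟨⟨hc.1, hc.2.1⟩, hc.2.2⟩⟩

variable (hconn : G.Connected) (hmed : Med G)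
include hconn

lemma dzero {u v : V} (h : G.dist u v = 0) : u = v := (hconn.dist_eq_zero_iff).mp h

include hmed in
/-- no vertex is equidistant from the two ends of an edge -/
lemma nbr_ne {x y : V} (hxy : G.Adj x y) (z : V) : G.dist z x ≠ G.dist z y := by
  intro h
  obtain ⟨m, ⟨h1, h2, h3⟩, -⟩ := hmed x y z
  rw [dist_eq_one_iff_adj.mpr hxy] at h1
  have hcm : G.dist z x = G.dist x z := G.dist_comm
  have hcm2 : G.dist z y = G.dist y z := G.dist_comm
  have hyx : G.dist y x = 1 := dist_eq_one_iff_adj.mpr hxy.symm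
  rcases Nat.le_one_iff_eq_zero_or_eq_one.mp (Nat.le.intro h1) with h0 | h0
  · -- m = x
    have hmx : x = m := dzero hconn h0
    rw [← hmx] at h2
    omega
  · have h0' : G.dist m y = 0 := by omega
    have hmy : m = y := dzero hconn h0'
    rw [hmy] at h2 h3
    rw [G.dist_self] at h2
    have hxy1 : G.dist x y = 1 := dist_eq_one_iff_adj.mpr hxy
    omega

include hmed in
lemma nbr_cases {x y : V} (hxy : G.Adj x y) (z : V) :
    G.dist z y = G.dist z x + 1 ∨ G.dist z x = G.dist z y + 1 := by
  have h1 : G.dist z y ≤ G.dist z x + G.dist x y := hconn.dist_triangle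
  have h2 : G.dist z x ≤ G.dist z y + G.dist y x := hconn.dist_triangle
  rw [dist_eq_one_iff_adj.mpr hxy] at h1
  rw [dist_eq_one_iff_adj.mpr hxy.symm] at h2
  have := nbr_ne hconn hmed hxy z
  omega

include hmed in
/-- crossing edge distance relations -/
lemma cross {a b x y : V} (hab : G.Adj a b) (hxy : G.Adj x y)
    (hx : G.dist x a < G.dist x b) (hy : G.dist y b < G.dist y a) :
    G.dist y a = G.dist x a + 1 ∧ G.dist y b = G.dist x a ∧ G.dist x b = G.dist x a + 1 := by
  have h1 := nbr_cases hconn hmed hab x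
  have h2 := nbr_cases hconn hmed hab y
  have h3 := nbr_cases hconn hmed hxy a
  have h4 := nbr_cases hconn hmed hxy b
  have c1 : G.dist a x = G.dist x a := G.dist_comm ..
  have c2 : G.dist a y = G.dist y a := G.dist_comm ..
  have c3 : G.dist b x = G.dist x b := G.dist_comm ..
  have c4 : G.dist b y = G.dist y b := G.dist_comm ..
  omega

include hmed in
/-- the base case: two W_ab vertices at distance 2 cannot have a common
neighbor in W_ba -/
lemma base {a b u v w : V} (hab : G.Adj a b)
    (hu : G.dist u a < G.dist u b) (hv : G.dist v a < G.dist v b)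
    (hw1 : G.Adj u w) (hw2 : G.Adj w v) (hwba : G.dist w b < G.dist w a)
    (huv : G.dist u v = 2) : False := by
  obtain ⟨c1, c2, c3⟩ := cross hconn hmed hab hw1 hu hwba
  obtain ⟨c4, c5, c6⟩ := cross hconn hmed hab hw2.symm hv hwba
  -- c1 : d w a = d u a + 1, c2 : d w b = d u a, c3 : d u b = d u a + 1
  -- c4 : d w a = d v a + 1, c5 : d w b = d v a, c6 : d v b = d v a + 1
  set r := G.dist u a with hr
  have hva : G.dist v a = r := by omega
  have hr1 : 1 ≤ r := by
    by_contra h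
    have h0 : u = a := dzero hconn (by omega)
    have h0' : v = a := dzero hconn (by omega)
    rw [h0, h0'] at huv
    rw [G.dist_self] at huv
    omega
  -- median of (u, v, a)
  obtain ⟨m, ⟨e1, e2, e3⟩, -⟩ := hmed u v a
  rw [huv] at e1
  have hma : G.dist m a = r - 1 ∧ G.dist u m = 1 ∧ G.dist m v = 1 := by
    have cm : G.dist v m = G.dist m v := G.dist_comm
    omega
  obtain ⟨hma, hum, hmv⟩ := hma
  have hmb : G.dist m b = r := by
    have h1 := nbr_cases hconn hmed hab m
    have h2 : G.dist u b ≤ G.dist u m + G.dist m b := hconn.dist_triangle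
    omega
  -- uniqueness of median of (u, v, b)
  obtain ⟨m2, -, uniq⟩ := hmed u v b
  have hwm2 : w = m2 := by
    apply uniq
    have d1 : G.dist u w = 1 := dist_eq_one_iff_adj.mpr hw1
    have d2 : G.dist w v = 1 := dist_eq_one_iff_adj.mpr hw2
    have d3 : G.dist v w = 1 := dist_eq_one_iff_adj.mpr hw2.symm
    refine ⟨by omega, by omega, by omega⟩
  have hmm2 : m = m2 := by
    apply uniq
    have cm : G.dist v m = G.dist m v := G.dist_comm
    refine ⟨by omega, by omega, by omega⟩
  have hmw : m = w := hmm2.trans hwm2.symm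
  rw [hmw] at hma
  omega

include hmed in
/-- quadrangle property -/
lemma quad {x y z p : V} {n : ℕ} (hxz : G.Adj x z) (hyz : G.Adj y z) (hxy : x ≠ y)
    (hx : G.dist x p = n) (hy : G.dist y p = n) (hz : G.dist z p = n + 1) :
    ∃ t, G.Adj x t ∧ G.Adj y t ∧ G.dist t p = n - 1 ∧ 1 ≤ n := by
  have hn1 : 1 ≤ n := by
    rcases Nat.eq_zero_or_pos n with h | h
    · exfalso
      have hxp : x = p := dzero hconn (by omega)
      have hyp : y = p := dzero hconn (by omega)
      exact hxy (hxp.trans hyp.symm)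
    · exact h
  have hxy2 : G.dist x y = 2 := by
    have h1 : G.dist x y ≤ G.dist x z + G.dist z y := hconn.dist_triangle
    rw [dist_eq_one_iff_adj.mpr hxz, dist_eq_one_iff_adj.mpr hyz.symm] at h1
    have h2 : G.dist x y ≠ 0 := fun h => hxy (dzero hconn h)
    have h3 : G.dist x y ≠ 1 := by
      intro h
      have hadj : G.Adj x y := dist_eq_one_iff_adj.mp h
      have := nbr_ne hconn hmed hadj z
      rw [G.dist_comm (u := z) (v := x), G.dist_comm (u := z) (v := y),
        dist_eq_one_iff_adj.mpr hxz, dist_eq_one_iff_adj.mpr hyz] at this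
      exact this rfl
    omega
  obtain ⟨m, ⟨e1, e2, e3⟩, -⟩ := hmed x y p
  rw [hxy2] at e1
  have hxm : G.dist x m = 1 ∧ G.dist m y = 1 ∧ G.dist m p = n - 1 := by
    have cm : G.dist y m = G.dist m y := G.dist_comm
    omega
  obtain ⟨h1, h2, h3⟩ := hxm
  refine ⟨m, dist_eq_one_iff_adj.mp h1, dist_eq_one_iff_adj.mp
    (by rw [G.dist_comm]; exact h2), h3, hn1⟩

/-- geodesics as functions: existence through a given intermediate vertex -/
lemma geo_exists {u v w : V} (hw : G.dist u w + G.dist w v = G.dist u v) :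
    ∃ f : ℕ → V, f 0 = u ∧ f (G.dist u v) = v ∧
      (∀ i < G.dist u v, G.Adj (f i) (f (i + 1))) ∧ f (G.dist u w) = w := by
  obtain ⟨p, hp⟩ := hconn.exists_walk_length_eq_dist u w
  obtain ⟨q, hq⟩ := hconn.exists_walk_length_eq_dist w v
  have hlen : (p.append q).length = G.dist u v := by
    rw [SimpleGraph.Walk.length_append, hp, hq, hw]
  refine ⟨(p.append q).getVert, SimpleGraph.Walk.getVert_zero _, ?_, ?_, ?_⟩
  · rw [← hlen]; exact SimpleGraph.Walk.getVert_length _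
  · intro i hi
    exact SimpleGraph.Walk.adj_getVert_succ _ (by omega)
  · rw [SimpleGraph.Walk.getVert_append, if_neg (by rw [hp]; omega), hp, Nat.sub_self]
    exact SimpleGraph.Walk.getVert_zero _

/-- distances along a geodesic -/
lemma geo_dist {u v : V} {k : ℕ} {f : ℕ → V} (h0 : f 0 = u) (hk : f k = v)
    (hadj : ∀ i < k, G.Adj (f i) (f (i + 1))) (hd : G.dist u v = k) :
    ∀ i j, i ≤ j → j ≤ k → G.dist (f i) (f j) = j - i := by
  have step : ∀ m i, i + m ≤ k → G.dist (f i) (f (i + m)) ≤ m := by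
    intro m
    induction m with
    | zero => intro i _; simp
    | succ m ih =>
      intro i hi
      have h1 : G.dist (f i) (f (i + m + 1)) ≤
          G.dist (f i) (f (i + m)) + G.dist (f (i + m)) (f (i + m + 1)) :=
        hconn.dist_triangle
      have h2 := ih i (by omega)
      have h3 : G.dist (f (i + m)) (f (i + m + 1)) = 1 :=
        dist_eq_one_iff_adj.mpr (hadj (i + m) (by omega))
      calc G.dist (f i) (f (i + m + 1)) ≤ _ := h1
        _ ≤ m + 1 := by omega
  intro i j hij hjk
  have hu1 : G.dist (f 0) (f i) ≤ i := by have := step i 0 (by omega); simpa using this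
  have hu2 : G.dist (f i) (f j) ≤ j - i := by
    have := step (j - i) i (by omega)
    rwa [Nat.add_sub_cancel' hij] at this
  have hu3 : G.dist (f j) (f k) ≤ k - j := by
    have := step (k - j) j (by omega)
    rwa [Nat.add_sub_cancel' hjk] at this
  have t1 : G.dist (f 0) (f k) ≤ G.dist (f 0) (f i) + G.dist (f i) (f k) :=
    hconn.dist_triangle
  have t2 : G.dist (f i) (f k) ≤ G.dist (f i) (f j) + G.dist (f j) (f k) :=
    hconn.dist_triangle
  rw [h0, hk] at t1
  rw [h0] at hu1
  rw [hk] at hu3 t2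
  omega

include hmed in
/-- halfspaces are convex -/
lemma convex {a b : V} (hab : G.Adj a b) :
    ∀ k u v w, G.dist u v = k → G.dist u a < G.dist u b → G.dist v a < G.dist v b →
      G.dist u w + G.dist w v = k → G.dist w a < G.dist w b := by
  intro k
  induction k using Nat.strong_induction_on with
  | _ k IH =>
  intro u v w hd hu hv hw
  by_contra hnw
  have hwba : G.dist w b < G.dist w a := by
    have := nbr_cases hconn hmed hab w
    omega
  have hw_ne_u : G.dist u w ≠ 0 := by
    intro h
    have h' : u = w := dzero hconn h
    rw [← h'] at hwba; omega
  have hw_ne_v : G.dist w v ≠ 0 := by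
    intro h
    have h' : w = v := dzero hconn h
    rw [h'] at hwba; omega
  have hw' : G.dist u w + G.dist w v = G.dist u v := by omega
  obtain ⟨f, hf0, hfk, hadj, hfw⟩ := geo_exists hconn hw'
  rw [hd] at hfk hadj
  have inner : ∀ s (g : ℕ → V), g 0 = u → g k = v → (∀ i < k, G.Adj (g i) (g (i+1))) →
      (∑ j ∈ Finset.range (k+1), G.dist (g j) a) = s →
      ∀ i₀, 0 < i₀ → i₀ < k → G.dist (g i₀) b < G.dist (g i₀) a → False := by
    intro s
    induction s using Nat.strong_induction_on with
    | _ s IHs =>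
    intro g hg0 hgk hgadj hsum i₀ h0i hik hgba
    have hgd := geo_dist hconn hg0 hgk hgadj hd
    -- Step A : find the maximal all-W_ba stretch around i₀
    set A := (Finset.range (i₀+1)).filter (fun j => G.dist (g j) a < G.dist (g j) b) with hA
    have hA0 : (0:ℕ) ∈ A :=
      Finset.mem_filter.mpr ⟨Finset.mem_range.mpr (by omega), by rw [hg0]; exact hu⟩
    have hAne : A.Nonempty := ⟨0, hA0⟩
    set p := A.max' hAne with hpdef
    have hpA : p ∈ A := A.max'_mem hAne
    have hpmax : ∀ j ∈ A, j ≤ p := fun j hj => A.le_max' j hj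
    obtain ⟨hp_range, hpW⟩ := Finset.mem_filter.mp hpA
    have hp_le : p ≤ i₀ := by have := Finset.mem_range.mp hp_range; omega
    have hp_lt : p < i₀ := by
      rcases Nat.lt_or_ge p i₀ with h|h
      · exact h
      · exfalso; have hpe : p = i₀ := by omega
        rw [hpe] at hpW; omega
    set Bs := (Finset.Icc i₀ k).filter (fun j => G.dist (g j) a < G.dist (g j) b) with hB
    have hBk : k ∈ Bs :=
      Finset.mem_filter.mpr ⟨Finset.mem_Icc.mpr ⟨by omega, le_refl k⟩, by rw [hgk]; exact hv⟩
    have hBne : Bs.Nonempty := ⟨k, hBk⟩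
    set q := Bs.min' hBne with hqdef
    have hqB : q ∈ Bs := Bs.min'_mem hBne
    have hqmin : ∀ j ∈ Bs, q ≤ j := fun j hj => Bs.min'_le j hj
    obtain ⟨hq_range, hqW⟩ := Finset.mem_filter.mp hqB
    have hq_mem := Finset.mem_Icc.mp hq_range
    have hq_gt : i₀ < q := by
      rcases Nat.lt_or_ge i₀ q with h|h
      · exact h
      · exfalso; have hqe : q = i₀ := by omega
        rw [hqe] at hqW; omega
    have hall : ∀ j, p < j → j < q → G.dist (g j) b < G.dist (g j) a := by
      intro j h1 h2
      have hne := nbr_ne hconn hmed hab (g j)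
      by_contra hcon
      have hW : G.dist (g j) a < G.dist (g j) b := by omega
      rcases le_or_gt j i₀ with hj | hj
      · have hjA : j ∈ A := Finset.mem_filter.mpr ⟨Finset.mem_range.mpr (by omega), hW⟩
        have := hpmax j hjA; omega
      · have hjB : j ∈ Bs := Finset.mem_filter.mpr ⟨Finset.mem_Icc.mpr ⟨by omega, by omega⟩, hW⟩
        have := hqmin j hjB; omega
    rcases Nat.lt_or_ge (q - p) k with hlt | hge
    · -- shorter geodesic: outer induction hypothesis
      have hmid : G.dist (g p) (g i₀) + G.dist (g i₀) (g q) = q - p := by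
        have h1 := hgd p i₀ (by omega) (by omega)
        have h2 := hgd i₀ q (by omega) (by omega)
        omega
      have := IH (q - p) hlt (g p) (g q) (g i₀)
        (hgd p q (by omega) (by omega)) hpW hqW hmid
      omega
    · have hp0 : p = 0 := by omega
      have hqk : q = k := by omega
      have hint : ∀ j, 0 < j → j < k → G.dist (g j) b < G.dist (g j) a := by
        intro j h1 h2; exact hall j (by omega) (by omega)
      rcases Nat.lt_or_ge k 3 with hk3 | hk3
      · -- k = 2 : base case
        have hk2 : k = 2 := by omega
        have hi1 : i₀ = 1 := by omega
        have hadj1 : G.Adj u (g 1) := by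
          have h := hgadj 0 (by omega); rwa [hg0] at h
        have hadj2 : G.Adj (g 1) v := by
          have h := hgadj 1 (by omega)
          have h2 : (1:ℕ) + 1 = k := by omega
          rw [h2, hgk] at h; exact h
        exact base hconn hmed hab hu hv hadj1 hadj2 (by rw [← hi1]; exact hgba) (by omega)
      · -- k ≥ 3 : peak surgery
        have hg1 : G.dist (g 1) a = G.dist (g 0) a + 1 := by
          have := cross hconn hmed hab (hgadj 0 (by omega))
            (by rw [hg0]; exact hu) (hint 1 (by omega) (by omega))
          exact this.1
        have hgk1 : G.dist (g (k-1)) a = G.dist (g k) a + 1 := by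
          have e : G.Adj (g k) (g (k-1)) := by
            have h := hgadj (k-1) (by omega)
            have h2 : k - 1 + 1 = k := by omega
            rw [h2] at h
            exact h.symm
          have := cross hconn hmed hab e (by rw [hgk]; exact hv)
            (hint (k-1) (by omega) (by omega))
          exact this.1
        obtain ⟨js, hjs_mem, hjs_max⟩ := Finset.exists_max_image (Finset.range (k+1))
          (fun j => G.dist (g j) a) ⟨0, Finset.mem_range.mpr (by omega)⟩
        have hjs_le : js ≤ k := by have := Finset.mem_range.mp hjs_mem; omega
        have hjs0 : js ≠ 0 := by
          intro h
          have hm : G.dist (g 1) a ≤ G.dist (g js) a :=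
            hjs_max 1 (Finset.mem_range.mpr (by omega))
          rw [h] at hm; omega
        have hjsk : js ≠ k := by
          intro h
          have hm : G.dist (g (k-1)) a ≤ G.dist (g js) a :=
            hjs_max (k-1) (Finset.mem_range.mpr (by omega))
          rw [h] at hm; omega
        have e1 : G.Adj (g (js-1)) (g js) := by
          have h := hgadj (js-1) (by omega)
          have h2 : js - 1 + 1 = js := by omega
          rwa [h2] at h
        have e2 : G.Adj (g js) (g (js+1)) := hgadj js (by omega)
        have hva : G.dist (g (js-1)) a + 1 = G.dist (g js) a := by
          have h := nbr_cases hconn hmed e1 a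
          have c1 : G.dist a (g (js-1)) = G.dist (g (js-1)) a := G.dist_comm
          have c2 : G.dist a (g js) = G.dist (g js) a := G.dist_comm
          have hm : G.dist (g (js-1)) a ≤ G.dist (g js) a :=
            hjs_max (js-1) (Finset.mem_range.mpr (by omega))
          omega
        have hvb : G.dist (g (js+1)) a + 1 = G.dist (g js) a := by
          have h := nbr_cases hconn hmed e2 a
          have c1 : G.dist a (g (js+1)) = G.dist (g (js+1)) a := G.dist_comm
          have c2 : G.dist a (g js) = G.dist (g js) a := G.dist_comm
          have hm : G.dist (g (js+1)) a ≤ G.dist (g js) a :=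
            hjs_max (js+1) (Finset.mem_range.mpr (by omega))
          omega
        have hne2 : g (js-1) ≠ g (js+1) := by
          intro h
          have hd2 : G.dist (g (js-1)) (g (js+1)) = js + 1 - (js - 1) :=
            hgd (js-1) (js+1) (by omega) (by omega)
          rw [h, G.dist_self] at hd2; omega
        obtain ⟨t, ht1, ht2, ht3, htn⟩ := quad hconn hmed e1 e2.symm hne2
          rfl (show G.dist (g (js+1)) a = G.dist (g (js-1)) a by omega)
          (show G.dist (g js) a = G.dist (g (js-1)) a + 1 by omega)
        set g' := Function.update g js t with hg'
        have happ : ∀ i, i ≠ js → g' i = g i := by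
          intro i hi; rw [hg', Function.update_apply, if_neg hi]
        have hjt : g' js = t := by rw [hg', Function.update_apply, if_pos rfl]
        have hg'0 : g' 0 = u := by rw [happ 0 (by omega), hg0]
        have hg'k : g' k = v := by rw [happ k (by omega), hgk]
        have hg'adj : ∀ i < k, G.Adj (g' i) (g' (i+1)) := by
          intro i hik2
          rcases eq_or_ne (i+1) js with h|h
          · have hi' : i = js - 1 := by omega
            rw [happ i (by omega), h, hjt, hi']
            exact ht1
          · rcases eq_or_ne i js with h2|h2
            · subst h2
              rw [hjt, happ (i+1) h]
              have hi' : i + 1 = i + 1 := rfl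
              exact ht2.symm
            · rw [happ i h2, happ (i+1) h]
              exact hgadj i hik2
        have hmem : js ∈ Finset.range (k+1) := Finset.mem_range.mpr (by omega)
        have hsum' : (∑ j ∈ Finset.range (k+1), G.dist (g' j) a) + 2 = s := by
          have h1 : (∑ j ∈ (Finset.range (k+1)).erase js, G.dist (g j) a) + G.dist (g js) a
              = ∑ j ∈ Finset.range (k+1), G.dist (g j) a :=
            Finset.sum_erase_add _ _ hmem
          have h2 : (∑ j ∈ (Finset.range (k+1)).erase js, G.dist (g' j) a) + G.dist (g' js) a
              = ∑ j ∈ Finset.range (k+1), G.dist (g' j) a :=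
            Finset.sum_erase_add _ _ hmem
          have h3 : ∑ j ∈ (Finset.range (k+1)).erase js, G.dist (g' j) a
              = ∑ j ∈ (Finset.range (k+1)).erase js, G.dist (g j) a :=
            Finset.sum_congr rfl (fun j hj => by
              rw [happ j (Finset.ne_of_mem_erase hj)])
          rw [hjt, ht3] at h2
          rw [h3] at h2
          omega
        have htc := nbr_cases hconn hmed hab t
        rcases htc with htb | htb
        · -- t ∈ W_ab : shorter geodesics via outer IH
          have hgd' := geo_dist hconn hg'0 hg'k hg'adj hd
          rcases Nat.lt_or_ge 1 js with hj1 | hj1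
          · have hdut : G.dist u t = js := by
              have h := hgd' 0 js (by omega) (by omega)
              rw [hg'0, hjt] at h; omega
            have hmid : G.dist u (g 1) + G.dist (g 1) t = js := by
              have h1 := hgd' 0 1 (by omega) (by omega)
              have h2 := hgd' 1 js (by omega) (by omega)
              rw [hg'0, happ 1 (by omega)] at h1
              rw [happ 1 (by omega), hjt] at h2
              omega
            have := IH js (by omega) u t (g 1) hdut hu (by omega) hmid
            have h1 := hint 1 (by omega) (by omega)
            omega
          · have hjs1 : js = 1 := by omega
            have hdtv : G.dist t v = k - 1 := by
              have h := hgd' js k (by omega) (by omega)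
              rw [hg'k, hjt] at h; omega
            have hmid : G.dist t (g 2) + G.dist (g 2) v = k - 1 := by
              have h1 := hgd' js 2 (by omega) (by omega)
              have h2 := hgd' 2 k (by omega) (by omega)
              rw [hjt, happ 2 (by omega)] at h1
              rw [happ 2 (by omega), hg'k] at h2
              omega
            have := IH (k-1) (by omega) t v (g 2) hdtv (by omega) hv hmid
            have h1 := hint 2 (by omega) (by omega)
            omega
        · -- t ∈ W_ba : smaller total sum, inner induction hypothesis
          exact IHs (∑ j ∈ Finset.range (k+1), G.dist (g' j) a) (by omega)
            g' hg'0 hg'k hg'adj rfl js (by omega) (by omega) (by rw [hjt]; omega)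
  exact inner _ f hf0 hfk hadj rfl (G.dist u w) (by omega) (by omega)
    (by rw [hfw]; omega)

include hmed in
/-- key lemma: if an edge xy crosses the split of edge ab then the splits agree -/
lemma keycross {a b x y : V} (hab : G.Adj a b) (hxy : G.Adj x y)
    (hx : G.dist x a < G.dist x b) (hy : G.dist y b < G.dist y a)
    (z : V) (hz : G.dist z a < G.dist z b) : G.dist z x < G.dist z y := by
  obtain ⟨m, ⟨e1, e2, e3⟩, -⟩ := hmed z x y
  have hxy1 : G.dist x y = 1 := dist_eq_one_iff_adj.mpr hxy
  rw [hxy1] at e2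
  rcases Nat.le_one_iff_eq_zero_or_eq_one.mp (Nat.le.intro e2) with h0 | h0
  · -- m = x : x lies between z and y, so d z y = d z x + 1
    have hmx : x = m := dzero hconn h0
    rw [← hmx] at e1 e3
    rw [G.dist_self] at e1
    omega
  · -- m = y : y lies between z and x, contradicting convexity
    have h0' : G.dist m y = 0 := by omega
    have hmy : m = y := dzero hconn h0'
    rw [hmy] at e1
    exfalso
    have hyx : G.dist z y + G.dist y x = G.dist z x := e1
    have := convex hconn hmed hab (G.dist z x) z x y rfl hz hx hyx
    omega

include hmed in
lemma keycross_iff {a b x y : V} (hab : G.Adj a b) (hxy : G.Adj x y)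
    (hx : G.dist x a < G.dist x b) (hy : G.dist y b < G.dist y a)
    (z : V) : (G.dist z a < G.dist z b) ↔ (G.dist z x < G.dist z y) := by
  obtain ⟨c1, c2, c3⟩ := cross hconn hmed hab hxy hx hy
  constructor
  · exact keycross hconn hmed hab hxy hx hy z
  · intro hz
    have ha : G.dist a x < G.dist a y := by
      have d1 : G.dist a x = G.dist x a := G.dist_comm
      have d2 : G.dist a y = G.dist y a := G.dist_comm
      omega
    have hb : G.dist b y < G.dist b x := by
      have d1 : G.dist b x = G.dist x b := G.dist_comm
      have d2 : G.dist b y = G.dist y b := G.dist_comm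
      omega
    exact keycross hconn hmed hxy hab ha hb z hz

end MedianPC

open MedianPC in
/-- Every median graph is a partial cube: it embeds isometrically into a hypercube. -/
theorem stmt5 {V : Type} [Fintype V] (G : SimpleGraph V) (hmed : IsMedianGraph G) :
    ∃ n : ℕ, ∃ f : V → Fin n → Bool, IsIsomEmb G n f := by
  classical
  obtain ⟨hconn, hmed'⟩ := hmed
  have hmed : Med G := med_of hmed'
  obtain ⟨r⟩ := hconn.nonempty
  set Spl : Finset (Finset V) := Finset.univ.filter (fun s : Finset V =>
    r ∈ s ∧ ∃ a b, G.Adj a b ∧ s = Finset.univ.filter (fun z => G.dist z a < G.dist z b))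
    with hSpl
  have count : ∀ k u v, G.dist u v = k →
      (Spl.filter (fun s => ¬(u ∈ s ↔ v ∈ s))).card = k := by
    intro k
    induction k using Nat.strong_induction_on with
    | _ k IHk =>
    intro u v hd
    rcases Nat.eq_zero_or_pos k with hk0 | hkpos
    · subst hk0
      have huv : u = v := dzero hconn hd
      subst huv
      rw [Finset.card_eq_zero, Finset.filter_eq_empty_iff]
      intro s _
      simp
    · obtain ⟨f, hf0, hfk, hadj, -⟩ := geo_exists hconn
        (show G.dist u u + G.dist u v = G.dist u v by simp)
      rw [hd] at hfk hadj
      set x := f 1 with hx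
      have hux : G.Adj u x := by rw [hx, ← hf0]; exact hadj 0 (by omega)
      have hgd := geo_dist hconn hf0 hfk hadj hd
      have hdxv : G.dist x v = k - 1 := by
        have h := hgd 1 k (by omega) (by omega)
        rw [hfk] at h
        rw [hx, h]
      have hdu : G.dist u u = 0 := by simp
      have hdxx : G.dist x x = 0 := by simp
      have hdux : G.dist u x = 1 := dist_eq_one_iff_adj.mpr hux
      have hdxu : G.dist x u = 1 := dist_eq_one_iff_adj.mpr hux.symm
      have hdvu : G.dist v u = k := by rw [G.dist_comm]; exact hd
      have hdvx : G.dist v x = k - 1 := by rw [G.dist_comm]; exact hdxv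
      obtain ⟨c, d, hcd, hrc, hor⟩ : ∃ c d, G.Adj c d ∧ G.dist r c < G.dist r d ∧
          ((c = u ∧ d = x) ∨ (c = x ∧ d = u)) := by
        rcases nbr_cases hconn hmed hux r with h | h
        · exact ⟨u, x, hux, by omega, Or.inl ⟨rfl, rfl⟩⟩
        · exact ⟨x, u, hux.symm, by omega, Or.inr ⟨rfl, rfl⟩⟩
      set s₀ : Finset V := Finset.univ.filter (fun z => G.dist z c < G.dist z d) with hs₀
      have hmem_s₀ : ∀ z, z ∈ s₀ ↔ G.dist z c < G.dist z d := by
        intro z; simp [hs₀]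
      have hs₀S : s₀ ∈ Spl := by
        rw [hSpl]
        simp only [Finset.mem_filter, Finset.mem_univ, true_and]
        exact ⟨(hmem_s₀ r).mpr hrc, c, d, hcd, rfl⟩
      have hi : ¬(u ∈ s₀ ↔ v ∈ s₀) := by
        rcases hor with ⟨hc, hd'⟩ | ⟨hc, hd'⟩
        · have h1 : u ∈ s₀ := (hmem_s₀ u).mpr (by rw [hc, hd']; omega)
          have h2 : v ∉ s₀ := fun h => by
            have hh := (hmem_s₀ v).mp h; rw [hc, hd'] at hh; omega
          exact fun h => h2 (h.mp h1)
        · have h1 : u ∉ s₀ := fun h => by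
            have hh := (hmem_s₀ u).mp h; rw [hc, hd'] at hh; omega
          have h2 : v ∈ s₀ := (hmem_s₀ v).mpr (by rw [hc, hd']; omega)
          exact fun h => h1 (h.mpr h2)
      have hii : (x ∈ s₀ ↔ v ∈ s₀) := by
        rcases hor with ⟨hc, hd'⟩ | ⟨hc, hd'⟩
        · exact iff_of_false
            (fun h => by have hh := (hmem_s₀ x).mp h; rw [hc, hd'] at hh; omega)
            (fun h => by have hh := (hmem_s₀ v).mp h; rw [hc, hd'] at hh; omega)
        · exact iff_of_true ((hmem_s₀ x).mpr (by rw [hc, hd']; omega))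
            ((hmem_s₀ v).mpr (by rw [hc, hd']; omega))
      have hsplit : ∀ s ∈ Spl, ¬(u ∈ s ↔ x ∈ s) → s = s₀ := by
        intro s hsS hsep
        rw [hSpl] at hsS
        simp only [Finset.mem_filter, Finset.mem_univ, true_and] at hsS
        obtain ⟨hrs, a', b', hab', hseq⟩ := hsS
        have hmem_s : ∀ z, z ∈ s ↔ G.dist z a' < G.dist z b' := by
          intro z; rw [hseq]; simp
        have hiff : ∀ z, (G.dist z a' < G.dist z b') ↔ (G.dist z c < G.dist z d) := by
          by_cases hus : u ∈ s
          · have hxs : x ∉ s := fun hxs => hsep (iff_of_true hus hxs)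
            have hu' : G.dist u a' < G.dist u b' := (hmem_s u).mp hus
            have hx' : G.dist x b' < G.dist x a' := by
              have h1 : ¬ (G.dist x a' < G.dist x b') := fun h => hxs ((hmem_s x).mpr h)
              have h2 := nbr_ne hconn hmed hab' x
              omega
            have hzz : ∀ z, (G.dist z a' < G.dist z b') ↔ (G.dist z u < G.dist z x) :=
              fun z => keycross_iff hconn hmed hab' hux hu' hx' z
            rcases hor with ⟨hc, hd'⟩ | ⟨hc, hd'⟩
            · intro z; rw [hc, hd']; exact hzz z
            · exfalso
              have hr1 : G.dist r a' < G.dist r b' := (hmem_s r).mp hrs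
              have hr2 := (hzz r).mp hr1
              rw [hc, hd'] at hrc
              omega
          · have hxs : x ∈ s := by
              by_contra hxs
              exact hsep (iff_of_false hus hxs)
            have hx' : G.dist x a' < G.dist x b' := (hmem_s x).mp hxs
            have hu' : G.dist u b' < G.dist u a' := by
              have h1 : ¬ (G.dist u a' < G.dist u b') := fun h => hus ((hmem_s u).mpr h)
              have h2 := nbr_ne hconn hmed hab' u
              omega
            have hzz : ∀ z, (G.dist z a' < G.dist z b') ↔ (G.dist z x < G.dist z u) :=
              fun z => keycross_iff hconn hmed hab' hux.symm hx' hu' z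
            rcases hor with ⟨hc, hd'⟩ | ⟨hc, hd'⟩
            · exfalso
              have hr1 : G.dist r a' < G.dist r b' := (hmem_s r).mp hrs
              have hr2 := (hzz r).mp hr1
              rw [hc, hd'] at hrc
              omega
            · intro z; rw [hc, hd']; exact hzz z
        apply Finset.ext
        intro z
        rw [hmem_s z, hmem_s₀ z]
        exact hiff z
      have hfilter : Spl.filter (fun s => ¬(u ∈ s ↔ v ∈ s))
          = insert s₀ (Spl.filter (fun s => ¬(x ∈ s ↔ v ∈ s))) := by
        apply Finset.ext
        intro s
        simp only [Finset.mem_filter, Finset.mem_insert]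
        constructor
        · rintro ⟨hsS, hsep⟩
          by_cases hs : s = s₀
          · exact Or.inl hs
          · refine Or.inr ⟨hsS, ?_⟩
            have hux_same : u ∈ s ↔ x ∈ s := by
              by_contra h
              exact hs (hsplit s hsS h)
            intro hxv
            exact hsep (hux_same.trans hxv)
        · rintro (hs | ⟨hsS, hsep⟩)
          · subst hs
            exact ⟨hs₀S, hi⟩
          · refine ⟨hsS, ?_⟩
            have hux_same : u ∈ s ↔ x ∈ s := by
              by_contra h
              have hseq := hsplit s hsS h
              subst hseq
              exact hsep hii
            intro huv2
            exact hsep (hux_same.symm.trans huv2)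
      have hs₀notin : s₀ ∉ Spl.filter (fun s => ¬(x ∈ s ↔ v ∈ s)) := by
        simp only [Finset.mem_filter]
        rintro ⟨-, hsep⟩
        exact hsep hii
      rw [hfilter, Finset.card_insert_of_notMem hs₀notin, IHk (k-1) (by omega) x v hdxv]
      omega
  set n := Spl.card with hn
  have e : {s // s ∈ Spl} ≃ Fin n := (Fintype.equivFin _).trans (finCongr (Fintype.card_coe Spl))
  refine ⟨n, fun v i => decide (v ∈ (e.symm i).1), ?_⟩
  intro u v
  have hcount := count (G.dist u v) u v rfl
  rw [← hcount]
  show (Finset.univ.filter fun i => decide (u ∈ (e.symm i).1) ≠ decide (v ∈ (e.symm i).1)).card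
    = (Spl.filter (fun s => ¬(u ∈ s ↔ v ∈ s))).card
  refine Finset.card_bij' (fun i _ => (((e.symm i) : {s // s ∈ Spl}) : Finset V))
    (fun s hs => e ⟨s, (Finset.mem_filter.mp hs).1⟩) ?hi ?hj ?li ?ri
  case hi =>
    intro i hi
    simp only [Finset.mem_filter, Finset.mem_univ, true_and] at hi ⊢
    refine ⟨(e.symm i).2, ?_⟩
    simpa [ne_eq, decide_eq_decide] using hi
  case hj =>
    intro s hs
    simp only [Finset.mem_filter, Finset.mem_univ, true_and]
    rw [Equiv.symm_apply_apply]
    simpa [ne_eq, decide_eq_decide] using (Finset.mem_filter.mp hs).2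
  case li =>
    intro i _
    exact e.apply_symm_apply i
  case ri =>
    intro s hs
    simp only [Equiv.symm_apply_apply]
end

section
/- An order embedding of a finite distributive lattice into the Boolean lattice {0,1}^n induces an isometric embedding of its Hasse diagram (as an undirected graph) into the hypercube Q_n, provided the embedding sends covering relations to covering relations. -/
open SimpleGraph

namespace Stmt11Aux

open Finset

variable {n : ℕ}

/-- support of a boolean vector -/
def supp (x : Fin n → Bool) : Finset (Fin n) := Finset.univ.filter fun i => x i = true

/-- weight of a boolean vector -/
def wt (x : Fin n → Bool) : ℕ := (supp x).card

lemma supp_mono {x y : Fin n → Bool} (h : x ≤ y) : supp x ⊆ supp y := by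
  intro i hi
  simp only [supp, mem_filter, mem_univ, true_and] at hi ⊢
  exact Bool.le_iff_imp.mp (h i) hi

lemma wt_mono {x y : Fin n → Bool} (h : x ≤ y) : wt x ≤ wt y :=
  card_le_card (supp_mono h)

lemma hamming_filter_eq (x y : Fin n → Bool) (h : x ≤ y) :
    (Finset.univ.filter fun i => x i ≠ y i) = supp y \ supp x := by
  ext i
  have hix := h i
  simp only [mem_filter, mem_univ, true_and, mem_sdiff, supp]
  cases hx : x i <;> cases hy : y i <;> rw [hx, hy] at hix <;>
    simp_all [Bool.le_iff_imp]

lemma hamming_of_le {x y : Fin n → Bool} (h : x ≤ y) :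
    hammingDist x y = wt y - wt x := by
  have : hammingDist x y = (Finset.univ.filter fun i => x i ≠ y i).card := rfl
  rw [this, hamming_filter_eq x y h, card_sdiff_of_subset (supp_mono h)]
  rfl

lemma eq_of_le_of_wt_le {x y : Fin n → Bool} (h : x ≤ y) (hw : wt y ≤ wt x) : x = y := by
  have hs : supp x = supp y := Finset.eq_of_subset_of_card_le (supp_mono h) hw
  funext i
  have hi := Finset.ext_iff.mp hs i
  simp only [supp, mem_filter, mem_univ, true_and] at hi
  cases hx : x i <;> cases hy : y i <;> simp_all

lemma supp_sup (x y : Fin n → Bool) : supp (x ⊔ y) = supp x ∪ supp y := by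
  ext i
  simp only [supp, mem_filter, mem_univ, true_and, mem_union, Pi.sup_apply]
  cases x i <;> cases y i <;> decide

/-- Hamming distance via the join. -/
lemma hamming_eq_sum (x y : Fin n → Bool) :
    hammingDist x y = (wt (x ⊔ y) - wt x) + (wt (x ⊔ y) - wt y) := by
  have hxy : supp (x ⊔ y) = supp x ∪ supp y := supp_sup x y
  have h1 : wt (x ⊔ y) - wt x = (supp y \ supp x).card := by
    have : supp (x ⊔ y) \ supp x = supp y \ supp x := by
      rw [hxy, union_sdiff_left]
    rw [wt, wt, ← card_sdiff_of_subset (supp_mono le_sup_left), this]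
  have h2 : wt (x ⊔ y) - wt y = (supp x \ supp y).card := by
    have : supp (x ⊔ y) \ supp y = supp x \ supp y := by
      rw [hxy, union_sdiff_right]
    rw [wt, wt, ← card_sdiff_of_subset (supp_mono le_sup_right), this]
  have hd : hammingDist x y = ((supp y \ supp x) ∪ (supp x \ supp y)).card := by
    have : hammingDist x y = (Finset.univ.filter fun i => x i ≠ y i).card := rfl
    rw [this]
    congr 1
    ext i
    simp only [mem_filter, mem_univ, true_and, mem_union, mem_sdiff, supp]
    cases x i <;> cases y i <;> decide
  rw [hd, h1, h2, card_union_of_disjoint, Nat.add_comm]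
  exact disjoint_sdiff_sdiff

section Lattice

variable {L : Type} [DistribLattice L] [Fintype L]
variable {f : L → Fin n → Bool}
variable (hemb : ∀ a b : L, a ≤ b ↔ f a ≤ f b)
variable (hcov : ∀ a b : L, a ⋖ b → f a ≤ f b ∧ hammingDist (f a) (f b) = 1)

include hemb hcov

lemma wt_covby {a b : L} (h : a ⋖ b) : wt (f b) = wt (f a) + 1 := by
  obtain ⟨hle, hd⟩ := hcov a b h
  have h1 := hamming_of_le hle
  have h2 := wt_mono hle
  omega

omit hemb hcov in
lemma exists_cov {a b : L} (h : a < b) : ∃ c, a ⋖ c ∧ c ≤ b := by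
  classical
  have hwf : WellFoundedLT L := Finite.to_wellFoundedLT
  obtain ⟨c, hc, hmin⟩ := hwf.wf.has_min {c | a < c ∧ c ≤ b} ⟨b, h, le_rfl⟩
  exact ⟨c, ⟨hc.1, fun z haz hzc => hmin z ⟨haz, hzc.le.trans hc.2⟩ hzc⟩, hc.2⟩

lemma eq_of_le_of_wtf {a b : L} (hab : a ≤ b) (hw : wt (f b) ≤ wt (f a)) : a = b := by
  have hfe : f a = f b := eq_of_le_of_wt_le ((hemb a b).mp hab) hw
  exact le_antisymm hab ((hemb b a).mpr (le_of_eq hfe.symm))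

lemma walk_up (k : ℕ) : ∀ a b : L, a ≤ b → wt (f b) - wt (f a) ≤ k →
    ∃ p : (hasse L).Walk a b, p.length = wt (f b) - wt (f a) := by
  induction k with
  | zero =>
    intro a b hab hk
    have : a = b := eq_of_le_of_wtf hemb hcov hab (by omega)
    subst this
    exact ⟨Walk.nil, by simp⟩
  | succ k ih =>
    intro a b hab hk
    rcases eq_or_lt_of_le hab with rfl | hlt
    · exact ⟨Walk.nil, by simp⟩
    · obtain ⟨c, hac, hcb⟩ := exists_cov hlt
      have hwc : wt (f c) = wt (f a) + 1 := wt_covby hemb hcov hac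
      have hcwb : wt (f c) ≤ wt (f b) := wt_mono ((hemb c b).mp hcb)
      obtain ⟨p, hp⟩ := ih c b hcb (by omega)
      refine ⟨Walk.cons (hasse_adj.mpr (Or.inl hac)) p, ?_⟩
      have hne : a ≠ b := ne_of_lt hlt
      have : wt (f a) < wt (f b) := by
        by_contra hcon
        exact hne (eq_of_le_of_wtf hemb hcov hab (by omega))
      simp only [Walk.length_cons, hp]
      omega

omit hemb hcov in
lemma covby_sup {x y b : L} (h : x ⋖ y) (hb : y ⊓ b ≤ x) : (x ⊔ b) ⋖ (y ⊔ b) := by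
  have hxy : x ≤ y := h.le
  have hnley : ¬ y ≤ x ⊔ b := by
    intro hy
    have : y = y ⊓ (x ⊔ b) := (inf_eq_left.mpr hy).symm
    rw [inf_sup_left, inf_eq_right.mpr hxy] at this
    have : y ≤ x := this.le.trans (sup_le le_rfl hb)
    exact h.lt.not_ge this
  constructor
  · rcases lt_or_eq_of_le (sup_le_sup_right hxy b) with h' | h'
    · exact h'
    · exact absurd (h' ▸ le_sup_left : y ≤ x ⊔ b) hnley
  · intro z hz1 hz2
    have hbz : b ≤ z := le_trans le_sup_right hz1.le
    have hxz : x ≤ z := le_trans le_sup_left hz1.le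
    have hzy : z ≤ y ⊔ b := hz2.le
    have hxzy : x ≤ z ⊓ y := le_inf hxz hxy
    rcases eq_or_lt_of_le hxzy with heq | hlt'
    · -- z ⊓ y = x, derive z = x ⊔ b
      have : z = z ⊓ (y ⊔ b) := (inf_eq_left.mpr hzy).symm
      rw [inf_sup_left, ← heq, inf_eq_right.mpr hbz] at this
      exact hz1.ne' this
    · have := h.2 hlt'
      -- ¬ z ⊓ y < y together with z ⊓ y ≤ y gives z ⊓ y = y
      have hy : z ⊓ y = y := by
        rcases eq_or_lt_of_le (inf_le_right : z ⊓ y ≤ y) with he | hl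
        · exact he
        · exact absurd hl this
      have : y ≤ z := by rw [← hy]; exact inf_le_left
      exact hz2.not_ge (sup_le this hbz)

lemma key (k : ℕ) : ∀ x y b : L, x ≤ y → y ⊓ b ≤ x → wt (f y) - wt (f x) ≤ k →
    f (y ⊔ b) ≤ f (x ⊔ b) ⊔ f y := by
  induction k with
  | zero =>
    intro x y b hxy hyb hk
    have : x = y := eq_of_le_of_wtf hemb hcov hxy (by omega)
    subst this
    exact le_sup_left
  | succ k ih =>
    intro x y b hxy hyb hk
    rcases eq_or_lt_of_le hxy with rfl | hlt
    · exact le_sup_left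
    · obtain ⟨c, hxc, hcy⟩ := exists_cov hlt
      have hwc : wt (f c) = wt (f x) + 1 := wt_covby hemb hcov hxc
      have hwxy : wt (f x) < wt (f y) := by
        by_contra hcon
        exact (ne_of_lt hlt) (eq_of_le_of_wtf hemb hcov hxy (by omega))
      have hcb_le : c ⊓ b ≤ x := le_trans (inf_le_inf_right b hcy) hyb
      have hcovC : (x ⊔ b) ⋖ (c ⊔ b) := covby_sup hxc hcb_le
      have hIH : f (y ⊔ b) ≤ f (c ⊔ b) ⊔ f y :=
        ih c y b hcy (le_trans hyb hxc.le) (by omega)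
      -- show f (c ⊔ b) ≤ f (x ⊔ b) ⊔ f c
      obtain ⟨hle1, hd1⟩ := hcov _ _ hcovC
      have hnotc : ¬ c ≤ x ⊔ b := by
        intro hcle
        have : c = c ⊓ (x ⊔ b) := (inf_eq_left.mpr hcle).symm
        rw [inf_sup_left, inf_eq_right.mpr hxc.le] at this
        have : c ≤ x := this.le.trans (sup_le le_rfl hcb_le)
        exact hxc.lt.not_ge this
      have hfnotc : ¬ f c ≤ f (x ⊔ b) := fun hcle => hnotc ((hemb c (x ⊔ b)).mpr hcle)
      rw [Pi.le_def] at hfnotc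
      push_neg at hfnotc
      obtain ⟨i, hi⟩ := hfnotc
      have hci : f c i = true ∧ f (x ⊔ b) i = false := by
        revert hi
        cases hc : f c i <;> cases hx : f (x ⊔ b) i <;> decide
      have hfcle : f c ≤ f (c ⊔ b) := (hemb c (c ⊔ b)).mp le_sup_left
      have hstep : f (c ⊔ b) ≤ f (x ⊔ b) ⊔ f c := by
        intro t
        simp only [Pi.sup_apply]
        cases hct : f (c ⊔ b) t
        · exact Bool.false_le _
        · cases hxt : f (x ⊔ b) t
          · -- t and i both in the (card = 1) difference set: t = i
            have hd1' : (Finset.univ.filter fun s => f (x ⊔ b) s ≠ f (c ⊔ b) s).card = 1 := hd1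
            have hti : t = i := by
              have hmt : t ∈ Finset.univ.filter fun s => f (x ⊔ b) s ≠ f (c ⊔ b) s := by
                simp [hxt, hct]
              have hmi : i ∈ Finset.univ.filter fun s => f (x ⊔ b) s ≠ f (c ⊔ b) s := by
                have : f (c ⊔ b) i = true :=
                  Bool.le_iff_imp.mp (hfcle i) hci.1
                simp [hci.2, this]
              exact Finset.card_le_one.mp hd1'.le t hmt i hmi
            rw [hti, hci.1]
            exact le_sup_right
          · exact le_sup_left
      have hfcy : f c ≤ f y := (hemb c y).mp hcy
      calc f (y ⊔ b) ≤ f (c ⊔ b) ⊔ f y := hIH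
        _ ≤ (f (x ⊔ b) ⊔ f c) ⊔ f y := sup_le_sup_right hstep _
        _ ≤ f (x ⊔ b) ⊔ f y := by
            rw [sup_assoc]
            exact sup_le_sup_left (sup_le hfcy le_rfl) _

lemma f_sup (a b : L) : f (a ⊔ b) = f a ⊔ f b := by
  apply le_antisymm
  · have h1 : f (a ⊔ b) ≤ f ((a ⊓ b) ⊔ b) ⊔ f a :=
      key hemb hcov (wt (f a) - wt (f (a ⊓ b))) (a ⊓ b) a b inf_le_left
        (le_refl (a ⊓ b)) le_rfl
    rw [sup_eq_right.mpr (inf_le_right : a ⊓ b ≤ b)] at h1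
    exact h1.trans (sup_comm (f b) (f a)).le
  · exact sup_le ((hemb a (a ⊔ b)).mp le_sup_left) ((hemb b (a ⊔ b)).mp le_sup_right)

lemma lip : ∀ {a b : L} (p : (hasse L).Walk a b), hammingDist (f a) (f b) ≤ p.length := by
  intro a b p
  induction p with
  | nil => simp [hammingDist_self]
  | @cons u v w h q ihq =>
    have h1 : hammingDist (f u) (f v) = 1 := by
      rcases hasse_adj.mp h with hc | hc
      · exact (hcov _ _ hc).2
      · rw [hammingDist_comm]; exact (hcov _ _ hc).2
    calc hammingDist (f u) (f w) ≤ hammingDist (f u) (f v) + hammingDist (f v) (f w) :=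
          hammingDist_triangle _ _ _
      _ ≤ 1 + q.length := Nat.add_le_add h1.le ihq
      _ = (Walk.cons h q).length := by simp [Walk.length_cons]; omega

end Lattice

end Stmt11Aux

/-- An order embedding of a finite distributive lattice into the Boolean lattice
`{0,1}^n` that sends covering relations to covering relations induces an isometric
embedding of its Hasse diagram (as an undirected graph) into the hypercube `Q_n`
(with Hamming distance). -/
theorem stmt11 {L : Type} [DistribLattice L] [Fintype L] (n : ℕ)
    (f : L → Fin n → Bool)
    (hemb : ∀ a b : L, a ≤ b ↔ f a ≤ f b)
    (hcov : ∀ a b : L, a ⋖ b → f a ≤ f b ∧ hammingDist (f a) (f b) = 1) :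
    ∀ a b : L, hammingDist (f a) (f b) = (SimpleGraph.hasse L).dist a b := by
  intro a b
  open Stmt11Aux in
  obtain ⟨p, hp⟩ := walk_up hemb hcov (Stmt11Aux.wt (f (a ⊔ b)) - Stmt11Aux.wt (f a)) a (a ⊔ b)
    le_sup_left le_rfl
  obtain ⟨q, hq⟩ := Stmt11Aux.walk_up hemb hcov (Stmt11Aux.wt (f (a ⊔ b)) - Stmt11Aux.wt (f b))
    b (a ⊔ b) le_sup_right le_rfl
  have hreach : (hasse L).Reachable a b := ⟨p.append q.reverse⟩
  apply le_antisymm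
  · obtain ⟨r, hr⟩ := hreach.exists_walk_length_eq_dist
    calc hammingDist (f a) (f b) ≤ r.length := Stmt11Aux.lip hemb hcov r
      _ = (hasse L).dist a b := hr
  · have hdle : (hasse L).dist a b ≤ (p.append q.reverse).length := SimpleGraph.dist_le _
    rw [Walk.length_append, Walk.length_reverse, hp, hq] at hdle
    have hfs := Stmt11Aux.f_sup hemb hcov a b
    have := Stmt11Aux.hamming_eq_sum (f a) (f b)
    rw [← hfs] at this
    omega
end

section
/- Every bipartite graph with a unique perfect matching has an edge whose removal (along with its endpoints) leaves a graph with a unique perfect matching; equivalently, a bipartite graph with exactly one perfect matching contains a pendant edge belonging to that matching. -/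
open SimpleGraph


section aux
set_option linter.unusedSectionVars false
variable {V : Type} [Fintype V] [DecidableEq V] {G : SimpleGraph V}

/-- Removing a matching edge of the unique perfect matching leaves a graph with a
unique perfect matching. -/
lemma aux_removed {M : G.Subgraph} (hM : M.IsPerfectMatching)
    (huniq : ∀ M' : G.Subgraph, M'.IsPerfectMatching → M' = M)
    {v w : V} (hvw : M.Adj v w) :
    ∃! N : (G.induce ({v, w}ᶜ : Set V)).Subgraph, N.IsPerfectMatching := by
  classical
  set s : Set V := ({v, w}ᶜ : Set V) with hs
  have hmem : ∀ x : V, x ∈ s ↔ x ≠ v ∧ x ≠ w := by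
    intro x; simp [hs]
  obtain ⟨f, hf, hfu⟩ : ∃ f : V → V, (∀ x, M.Adj x (f x)) ∧ ∀ x y, M.Adj x y → y = f x := by
    have hex := (Subgraph.isPerfectMatching_iff).mp hM
    choose f hf hfu using hex
    exact ⟨f, hf, hfu⟩
  have hne : v ≠ w := (M.adj_sub hvw).ne
  have hfv : f v = w := (hfu v w hvw).symm
  have hfw : f w = v := (hfu w v hvw.symm).symm
  have hfinv : ∀ x, f (f x) = x := fun x => (hfu (f x) x (hf x).symm).symm
  -- the restricted matching
  have hfs : ∀ x : V, x ∈ s → f x ∈ s := by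
    intro x hx
    rw [hmem] at hx ⊢
    constructor
    · intro h
      exact hx.2 (by calc x = f (f x) := (hfinv x).symm
                    _ = f v := by rw [h]
                    _ = w := hfv)
    · intro h
      exact hx.1 (by calc x = f (f x) := (hfinv x).symm
                    _ = f w := by rw [h]
                    _ = v := hfw)
  set N : (G.induce s).Subgraph :=
    { verts := Set.univ
      Adj := fun p q => M.Adj p.1 q.1
      adj_sub := by
        intro p q h
        simpa using M.adj_sub h
      edge_vert := fun _ => Set.mem_univ _
      symm := ⟨fun p q h => h.symm⟩ } with hN
  refine ⟨N, ?_, ?_⟩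
  · constructor
    · intro p _
      refine ⟨⟨f p.1, hfs _ p.2⟩, hf p.1, ?_⟩
      intro q hq
      exact Subtype.ext (hfu _ _ hq)
    · intro p; exact Set.mem_univ _
  · -- uniqueness
    intro N' hN'
    -- extend N' to a perfect matching of G
    set M'' : G.Subgraph :=
      { verts := Set.univ
        Adj := fun p q => (p = v ∧ q = w) ∨ (p = w ∧ q = v) ∨
          ∃ (hp : p ∈ s) (hq : q ∈ s), N'.Adj ⟨p, hp⟩ ⟨q, hq⟩
        adj_sub := by
          rintro p q (⟨rfl, rfl⟩ | ⟨rfl, rfl⟩ | ⟨hp, hq, h⟩)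
          · exact M.adj_sub hvw
          · exact (M.adj_sub hvw).symm
          · exact N'.adj_sub h
        edge_vert := fun _ => Set.mem_univ _
        symm := by
          refine ⟨?_⟩
          rintro p q (⟨rfl, rfl⟩ | ⟨rfl, rfl⟩ | ⟨hp, hq, h⟩)
          · exact Or.inr (Or.inl ⟨rfl, rfl⟩)
          · exact Or.inl ⟨rfl, rfl⟩
          · exact Or.inr (Or.inr ⟨hq, hp, h.symm⟩) } with hM''
    have hvns : v ∉ s := by rw [hmem]; simp
    have hwns : w ∉ s := by rw [hmem]; simp
    have hM''pm : M''.IsPerfectMatching := by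
      rw [Subgraph.isPerfectMatching_iff]
      intro p
      by_cases hpv : p = v
      · subst hpv
        refine ⟨w, Or.inl ⟨rfl, rfl⟩, ?_⟩
        rintro y (⟨_, rfl⟩ | ⟨h, rfl⟩ | ⟨hp, hq, h⟩)
        · rfl
        · exact absurd h hne
        · exact absurd hp hvns
      · by_cases hpw : p = w
        · subst hpw
          refine ⟨v, Or.inr (Or.inl ⟨rfl, rfl⟩), ?_⟩
          rintro y (⟨h, rfl⟩ | ⟨_, rfl⟩ | ⟨hp, hq, h⟩)
          · exact absurd h hne.symm
          · rfl
          · exact absurd hp hwns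
        · have hps : p ∈ s := by rw [hmem]; exact ⟨hpv, hpw⟩
          obtain ⟨q, hq, hqu⟩ := hN'.1 (hN'.2 ⟨p, hps⟩)
          refine ⟨q.1, Or.inr (Or.inr ⟨hps, q.2, hq⟩), ?_⟩
          rintro y (⟨h, rfl⟩ | ⟨h, rfl⟩ | ⟨hp, hy, h⟩)
          · exact absurd h hpv
          · exact absurd h hpw
          · exact congrArg Subtype.val (hqu ⟨y, hy⟩ h)
    have hMM : M'' = M := huniq M'' hM''pm
    -- now show N' equals our matching
    have hsp : N'.verts = Set.univ := Set.eq_univ_of_forall hN'.2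
    ext p q
    · simp [hsp, hN]
    · constructor
      · intro h
        have : M''.Adj p.1 q.1 := Or.inr (Or.inr ⟨p.2, q.2, h⟩)
        rw [hMM] at this
        exact this
      · intro h
        have hM'' : M''.Adj p.1 q.1 := by rw [hMM]; exact h
        rcases hM'' with ⟨hp, _⟩ | ⟨hp, _⟩ | ⟨hp, hq, hadj⟩
        · exact absurd hp ((hmem p.1).mp p.2).1
        · exact absurd hp ((hmem p.1).mp p.2).2
        · exact hadj

end aux



section aux2
set_option linter.unusedSectionVars false
variable {V : Type} [Fintype V] [DecidableEq V] [Nonempty V] {G : SimpleGraph V}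

lemma aux_pendant (hbip : G.Colorable 2) {M : G.Subgraph} (hM : M.IsPerfectMatching)
    (huniq : ∀ M' : G.Subgraph, M'.IsPerfectMatching → M' = M) :
    ∃ v : V, (G.neighborSet v).ncard = 1 := by
  classical
  by_contra hcon
  push_neg at hcon
  obtain ⟨f, hf, hfu⟩ : ∃ f : V → V, (∀ x, M.Adj x (f x)) ∧ ∀ x y, M.Adj x y → y = f x := by
    have hex := (Subgraph.isPerfectMatching_iff).mp hM
    choose f hf hfu using hex
    exact ⟨f, hf, hfu⟩
  have hfinv : ∀ x, f (f x) = x := fun x => (hfu (f x) x (hf x).symm).symm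
  have hfG : ∀ x, G.Adj x (f x) := fun x => M.adj_sub (hf x)
  -- every vertex has a neighbor distinct from its matching partner
  have hbig : ∀ x : V, ∃ u, u ∈ G.neighborSet x ∧ u ≠ f x := by
    intro x
    have h1 : 1 < (G.neighborSet x).ncard := by
      have hfin : (G.neighborSet x).Finite := Set.toFinite _
      have hpos : 0 < (G.neighborSet x).ncard :=
        (Set.ncard_pos hfin).mpr ⟨f x, hfG x⟩
      have := hcon x
      omega
    exact Set.exists_ne_of_one_lt_ncard h1 (f x)
  choose g hgadj hgne using hbig
  simp only [mem_neighborSet] at hgadj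
  -- the coloring
  obtain ⟨c⟩ := hbip
  have hc2 : ∀ x y : Fin 2, x ≠ y → y ≠ 0 → x = 0 := by decide
  have hc2' : ∀ x y : Fin 2, x ≠ y → y = 0 → x ≠ 0 := by decide
  set h : V → V := fun x => f (g x) with hh
  have hhA : ∀ x, c x = 0 → c (h x) = 0 := by
    intro x hx
    have h1 : c (g x) ≠ 0 := hc2' _ _ (c.valid (hgadj x).symm) hx
    exact hc2 _ _ (c.valid (hfG (g x)).symm) h1
  have hhne : ∀ x, h x ≠ x := by
    intro x hx
    apply hgne x
    have hx' : f (g x) = x := hx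
    calc g x = f (f (g x)) := (hfinv _).symm
      _ = f x := by rw [hx']
  -- find a starting vertex of color 0
  obtain ⟨a, ha⟩ : ∃ a : V, c a = 0 := by
    obtain ⟨v0⟩ := ‹Nonempty V›
    by_cases h0 : c v0 = 0
    · exact ⟨v0, h0⟩
    · exact ⟨g v0, hc2 _ _ (c.valid (hgadj v0)).symm h0⟩
  -- iterates of h from a stay in color 0
  have hA_iter : ∀ n, c (h^[n] a) = 0 := by
    intro n; induction n with
    | zero => simpa using ha
    | succ n ih => rw [Function.iterate_succ_apply']; exact hhA _ ih
  -- find a periodic point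
  obtain ⟨i, j, hij, heq⟩ : ∃ i j : ℕ, i < j ∧ h^[i] a = h^[j] a := by
    obtain ⟨i, j, hne, heq⟩ := Finite.exists_ne_map_eq_of_infinite (fun n : ℕ => h^[n] a)
    rcases hne.lt_or_gt with h' | h'
    · exact ⟨i, j, h', heq⟩
    · exact ⟨j, i, h', heq.symm⟩
  set x : V := h^[i] a with hxdef
  set m : ℕ := j - i with hmdef
  have hm : 0 < m := by omega
  have hxper : h^[m] x = x := by
    conv_lhs => rw [hxdef]
    rw [← Function.iterate_add_apply]
    have h2 : m + i = j := by omega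
    rw [h2, ← heq]
  set S : Set V := {y | ∃ l, h^[l] x = y} with hSdef
  have hxS : x ∈ S := ⟨0, rfl⟩
  have hmaps : ∀ y ∈ S, h y ∈ S := by
    rintro y ⟨l, rfl⟩
    exact ⟨l + 1, Function.iterate_succ_apply' h l x⟩
  have hsurj : ∀ y ∈ S, ∃ z ∈ S, h z = y := by
    rintro y ⟨l, rfl⟩
    refine ⟨h^[l + m - 1] x, ⟨l + m - 1, rfl⟩, ?_⟩
    rw [← Function.iterate_succ_apply' h (l + m - 1) x]
    have h3 : l + m - 1 + 1 = l + m := by omega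
    rw [Nat.succ_eq_add_one, h3, Function.iterate_add_apply, hxper]
  have hSA : ∀ y ∈ S, c y = 0 := by
    rintro y ⟨l, rfl⟩
    rw [hxdef, ← Function.iterate_add_apply]
    exact hA_iter _
  have hSfin : S.Finite := Set.toFinite _
  have hinj : Set.InjOn h S := by
    have hmapsto : Set.MapsTo h S S := fun y hy => hmaps y hy
    have hsurjon : Set.SurjOn h S S := by
      rintro y hy
      obtain ⟨z, hz, hzy⟩ := hsurj y hy
      exact ⟨z, hz, hzy⟩
    exact ((hSfin.surjOn_iff_bijOn_of_mapsTo hmapsto).mp hsurjon).injOn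
  set T : Set V := g '' S with hTdef
  have hTc : ∀ y ∈ T, c y ≠ 0 := by
    rintro y ⟨z, hz, rfl⟩
    exact hc2' _ _ (c.valid (hgadj z)).symm (hSA z hz)
  have hST : ∀ y ∈ S, y ∉ T := fun y hy hyT => (hTc y hyT) (hSA y hy)
  have hginj : Set.InjOn g S := by
    intro a1 h1 a2 h2 hgeq
    exact hinj h1 h2 (by rw [hh]; simp only [hgeq])
  have hout : ∀ y, y ∉ S → y ∉ T → f y ∉ S ∧ f y ∉ T := by
    intro y hyS hyT
    constructor
    · intro hfyS
      obtain ⟨z, hz, hzy⟩ := hsurj (f y) hfyS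
      have : g z = y := by
        have h1 : f (g z) = f y := hzy
        calc g z = f (f (g z)) := (hfinv _).symm
          _ = f (f y) := by rw [h1]
          _ = y := hfinv y
      exact hyT ⟨z, hz, this⟩
    · rintro ⟨z, hz, hzy⟩
      apply hyS
      have : y = h z := by
        calc y = f (f y) := (hfinv y).symm
          _ = f (g z) := by rw [hzy]
      rw [this]
      exact hmaps z hz
  -- the new perfect matching
  set M' : G.Subgraph :=
    { verts := Set.univ
      Adj := fun p q => (p ∈ S ∧ q = g p) ∨ (q ∈ S ∧ p = g q) ∨
        (p ∉ S ∧ p ∉ T ∧ q ∉ S ∧ q ∉ T ∧ M.Adj p q)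
      adj_sub := by
        rintro p q (⟨hp, rfl⟩ | ⟨hq, rfl⟩ | ⟨_, _, _, _, hA⟩)
        · exact hgadj p
        · exact (hgadj q).symm
        · exact M.adj_sub hA
      edge_vert := fun _ => Set.mem_univ _
      symm := by
        refine ⟨?_⟩
        rintro p q (⟨hp, rfl⟩ | ⟨hq, rfl⟩ | ⟨h1, h2, h3, h4, hA⟩)
        · exact Or.inr (Or.inl ⟨hp, rfl⟩)
        · exact Or.inl ⟨hq, rfl⟩
        · exact Or.inr (Or.inr ⟨h3, h4, h1, h2, hA.symm⟩) } with hM'def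
  have hM'pm : M'.IsPerfectMatching := by
    rw [Subgraph.isPerfectMatching_iff]
    intro p
    by_cases hpS : p ∈ S
    · refine ⟨g p, Or.inl ⟨hpS, rfl⟩, ?_⟩
      rintro y (⟨_, rfl⟩ | ⟨hy, rfl⟩ | ⟨h1, _⟩)
      · rfl
      · exact absurd (⟨y, hy, rfl⟩ : g y ∈ T) (hST _ hpS)
      · exact absurd hpS h1
    · by_cases hpT : p ∈ T
      · obtain ⟨z, hz, hzp⟩ := hpT
        refine ⟨z, Or.inr (Or.inl ⟨hz, hzp.symm⟩), ?_⟩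
        rintro y (⟨h1, rfl⟩ | ⟨hy, rfl⟩ | ⟨_, h2, _⟩)
        · exact absurd h1 hpS
        · exact (hginj hz hy hzp).symm
        · exact absurd ⟨z, hz, hzp⟩ h2
      · obtain ⟨hf1, hf2⟩ := hout p hpS hpT
        refine ⟨f p, Or.inr (Or.inr ⟨hpS, hpT, hf1, hf2, hf p⟩), ?_⟩
        rintro y (⟨h1, rfl⟩ | ⟨hy, rfl⟩ | ⟨_, _, _, _, hA⟩)
        · exact absurd h1 hpS
        · exact absurd ⟨y, hy, rfl⟩ hpT
        · exact hfu p y hA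
  have hMM : M' = M := huniq M' hM'pm
  have hadj : M'.Adj x (g x) := Or.inl ⟨hxS, rfl⟩
  rw [hMM] at hadj
  exact hgne x (hfu x (g x) hadj)

end aux2

/-- Every (nonempty) bipartite graph with a unique perfect matching contains a pendant
edge belonging to that matching; equivalently, it has an edge whose removal (along with
its endpoints) leaves a graph with a unique perfect matching. -/
theorem stmt12 {V : Type} [Fintype V] [DecidableEq V] [Nonempty V]
    {G : SimpleGraph V} (hbip : G.Colorable 2)
    {M : G.Subgraph} (hM : M.IsPerfectMatching)
    (huniq : ∀ M' : G.Subgraph, M'.IsPerfectMatching → M' = M) :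
    ∃ v w : V, G.Adj v w ∧ M.Adj v w ∧ (G.neighborSet v).ncard = 1 ∧
      ∃! N : (G.induce ({v, w}ᶜ : Set V)).Subgraph, N.IsPerfectMatching := by
  obtain ⟨v, hv⟩ := aux_pendant hbip hM huniq
  obtain ⟨w, hw, -⟩ := hM.1 (hM.2 v)
  exact ⟨v, w, M.adj_sub hw, hw, hv, aux_removed hM huniq hw⟩
end

section
/- A graph that can be obtained from a single vertex by a sequence of peripheral convex expansions is a median graph, and each peripheral convex expansion increases the number of Θ-classes (isometric dimension) by exactly one. -/
open SimpleGraph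

/-- `S` is convex in `G`. -/
def IsConvexSet {V : Type} (G : SimpleGraph V) (S : Set V) : Prop :=
  ∀ u ∈ S, ∀ v ∈ S, ∀ w ∈ interval G u v, w ∈ S

/-- The induced subgraph on `S` is an isometric subgraph of `G`. -/
def IsIsometricSet {V : Type} (G : SimpleGraph V) (S : Set V) : Prop :=
  ∀ u v : ↥S, (G.induce S).dist u v = G.dist u.1 v.1

/-- Underlying one-sided relation of the peripheral expansion of `G` along `S`:
a copy of `G` together with a disjoint copy of the subgraph induced on `S`, each
vertex of `S` in the copy of `G` being joined to the corresponding new vertex. -/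
def periphRel {V : Type} (G : SimpleGraph V) (S : Set V) :
    (V ⊕ ↥S) → (V ⊕ ↥S) → Prop
  | Sum.inl u, Sum.inl v => G.Adj u v
  | Sum.inl u, Sum.inr v => u = v.1
  | Sum.inr _, Sum.inl _ => False
  | Sum.inr u, Sum.inr v => G.Adj u.1 v.1

/-- The peripheral expansion of `G` along `S`. -/
def periphExpansion {V : Type} (G : SimpleGraph V) (S : Set V) :
    SimpleGraph (V ⊕ ↥S) :=
  SimpleGraph.fromRel (periphRel G S)

/-- Graphs obtainable from a single vertex by a sequence of peripheral convex expansions. -/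
inductive BuiltByPeripheralConvexExpansions : ∀ (V : Type), SimpleGraph V → Prop
  | single : BuiltByPeripheralConvexExpansions PUnit ⊥
  | expand {V : Type} {G : SimpleGraph V} (S : Set V) (hne : S.Nonempty)
      (hiso : IsIsometricSet G S) (hconv : IsConvexSet G S)
      (hG : BuiltByPeripheralConvexExpansions V G) :
      BuiltByPeripheralConvexExpansions (V ⊕ ↥S) (periphExpansion G S)

/- ===== auxiliary development ===== -/
open Sum Finset

namespace PeriphAux

variable {V : Type} {G : SimpleGraph V} {S : Set V}

@[simp] lemma pe_adj_ll {u v : V} :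
    (periphExpansion G S).Adj (inl u) (inl v) ↔ G.Adj u v := by
  constructor
  · rintro ⟨-, h | h⟩
    · exact h
    · exact h.symm
  · intro h; exact ⟨by simpa using h.ne, Or.inl h⟩

@[simp] lemma pe_adj_rr {u v : ↥S} :
    (periphExpansion G S).Adj (inr u) (inr v) ↔ G.Adj u.1 v.1 := by
  constructor
  · rintro ⟨-, h | h⟩
    · exact h
    · exact h.symm
  · intro h; exact ⟨by simp [Subtype.ext_iff] at *; exact h.ne, Or.inl h⟩

@[simp] lemma pe_adj_lr {u : V} {v : ↥S} :
    (periphExpansion G S).Adj (inl u) (inr v) ↔ u = v.1 := by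
  constructor
  · rintro ⟨-, h | h⟩
    · exact h
    · exact h.elim
  · intro h; exact ⟨by simp, Or.inl h⟩

@[simp] lemma pe_adj_rl {u : ↥S} {v : V} :
    (periphExpansion G S).Adj (inr u) (inl v) ↔ v = u.1 := by
  rw [adj_comm]; exact pe_adj_lr

def homInl : G →g periphExpansion G S where
  toFun := inl
  map_rel' := fun h => pe_adj_ll.mpr h

def homInr : (G.induce S) →g periphExpansion G S where
  toFun := inr
  map_rel' := fun h => pe_adj_rr.mpr h

/-- projection -/
def pproj : (V ⊕ ↥S) → V := Sum.elim id Subtype.val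

lemma pe_connected (hG : G.Connected) : (periphExpansion G S).Connected := by
  have hne : Nonempty (V ⊕ ↥S) := ⟨inl hG.nonempty.some⟩
  rw [connected_iff]
  refine ⟨?_, hne⟩
  have key : ∀ a : V ⊕ ↥S, (periphExpansion G S).Reachable a (inl (pproj a)) := by
    rintro (u | s)
    · exact Reachable.refl _
    · exact Adj.reachable (by rw [pe_adj_rl]; rfl)
  intro a b
  refine (key a).trans (Reachable.trans ?_ (key b).symm)
  have : G.Reachable (pproj a) (pproj b) := hG (pproj a) (pproj b)
  obtain ⟨w⟩ := this
  exact ⟨w.map homInl⟩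

/-- A 1-Lipschitz potential bounds walk lengths from below. -/
lemma lip_walk {W : Type} {H : SimpleGraph W} (φ : W → ℕ)
    (hφ : ∀ a b, H.Adj a b → φ a ≤ φ b + 1) :
    ∀ {a b : W} (w : H.Walk a b), φ a ≤ φ b + w.length := by
  intro a b w
  induction w with
  | nil => simp
  | cons h w ih =>
    have := hφ _ _ h
    simp only [Walk.length_cons]
    omega

section dists
variable (hG : G.Connected) (hiso : IsIsometricSet G S)
include hG

lemma pe_lip (v : V) :
    ∀ a b, (periphExpansion G S).Adj a b →
      G.dist (pproj a) v ≤ G.dist (pproj b) v + 1 := by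
  rintro (x | x) (y | y) h
  · have h1 : G.Adj x y := pe_adj_ll.mp h
    have h2 := hG.dist_triangle (u := x) (v := y) (w := v)
    have h3 := dist_eq_one_iff_adj.mpr h1
    simp only [pproj, Sum.elim_inl, id_eq]; omega
  · have : x = y.1 := pe_adj_lr.mp h
    simp [pproj, this]
  · have : y = x.1 := pe_adj_rl.mp h
    simp [pproj, this]
  · have h1 : G.Adj x.1 y.1 := pe_adj_rr.mp h
    have h2 := hG.dist_triangle (u := x.1) (v := y.1) (w := v)
    have h3 := dist_eq_one_iff_adj.mpr h1
    simp only [pproj, Sum.elim_inr]; omega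

lemma pe_dist_ll (u v : V) :
    (periphExpansion G S).dist (inl u) (inl v) = G.dist u v := by
  apply le_antisymm
  · obtain ⟨w, hw⟩ := hG.exists_walk_length_eq_dist u v
    calc (periphExpansion G S).dist (inl u) (inl v) ≤ (w.map homInl).length :=
          dist_le _
      _ = G.dist u v := by rw [Walk.length_map, hw]
  · obtain ⟨w, hw⟩ := (pe_connected (S := S) hG).exists_walk_length_eq_dist (inl u) (inl v)
    have := lip_walk _ (pe_lip hG v) w
    simp only [pproj, Sum.elim_inl, id_eq, SimpleGraph.dist_self] at this
    omega

lemma pe_dist_lr (u : V) (s : ↥S) :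
    (periphExpansion G S).dist (inl u) (inr s) = G.dist u s.1 + 1 := by
  apply le_antisymm
  · obtain ⟨w, hw⟩ := hG.exists_walk_length_eq_dist u s.1
    have hadj : (periphExpansion G S).Adj (inl s.1) (inr s) := pe_adj_lr.mpr rfl
    calc (periphExpansion G S).dist (inl u) (inr s)
        ≤ ((w.map homInl).concat hadj).length := dist_le _
      _ = G.dist u s.1 + 1 := (Walk.length_concat _ _).trans (by rw [Walk.length_map, hw])
  · obtain ⟨w, hw⟩ := (pe_connected (S := S) hG).exists_walk_length_eq_dist (inl u) (inr s)
    have key : ∀ a b, (periphExpansion G S).Adj a b →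
        Sum.elim (fun x => G.dist x s.1 + 1) (fun t : ↥S => G.dist t.1 s.1) a ≤
        Sum.elim (fun x => G.dist x s.1 + 1) (fun t : ↥S => G.dist t.1 s.1) b + 1 := by
      rintro (x | x) (y | y) h
      · have h1 : G.Adj x y := pe_adj_ll.mp h
        have h2 := hG.dist_triangle (u := x) (v := y) (w := s.1)
        have h3 := dist_eq_one_iff_adj.mpr h1
        simp only [Sum.elim_inl]; omega
      · have : x = y.1 := pe_adj_lr.mp h
        simp [this]
      · have : y = x.1 := pe_adj_rl.mp h
        simp only [this, Sum.elim_inl, Sum.elim_inr]; omega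
      · have h1 : G.Adj x.1 y.1 := pe_adj_rr.mp h
        have h2 := hG.dist_triangle (u := x.1) (v := y.1) (w := s.1)
        have h3 := dist_eq_one_iff_adj.mpr h1
        simp only [Sum.elim_inr]; omega
    have := lip_walk _ key w
    simp only [Sum.elim_inl, Sum.elim_inr, SimpleGraph.dist_self] at this
    omega

include hiso in
lemma pe_dist_rr (s t : ↥S) :
    (periphExpansion G S).dist (inr s) (inr t) = G.dist s.1 t.1 := by
  apply le_antisymm
  · rcases eq_or_ne s t with rfl | hst
    · simp [SimpleGraph.dist_self]
    · have h1 : s.1 ≠ t.1 := fun h => hst (Subtype.ext h)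
      have h2 : (G.induce S).dist s t ≠ 0 := by
        rw [hiso s t]
        exact (hG.dist_eq_zero_iff.not.mpr h1)
      obtain ⟨w, hw⟩ := exists_walk_of_dist_ne_zero h2
      calc (periphExpansion G S).dist (inr s) (inr t) ≤ (w.map homInr).length := dist_le _
        _ = G.dist s.1 t.1 := by rw [Walk.length_map, hw, hiso]
  · obtain ⟨w, hw⟩ := (pe_connected (S := S) hG).exists_walk_length_eq_dist (inr s) (inr t)
    have := lip_walk _ (pe_lip hG t.1) w
    simp only [pproj, Sum.elim_inr, SimpleGraph.dist_self] at this
    omega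

lemma pe_dist_rl (s : ↥S) (u : V) :
    (periphExpansion G S).dist (inr s) (inl u) = G.dist u s.1 + 1 := by
  rw [dist_comm]; exact pe_dist_lr hG u s

end dists

/-! ### Hamming toolkit -/

def bd (a b : Bool) : ℕ := if a = b then 0 else 1
def maj (a b c : Bool) : Bool := (a && b) || (b && c) || (a && c)

lemma hamming_eq_sum {n : ℕ} (x y : Fin n → Bool) :
    hammingDist x y = ∑ i, bd (x i) (y i) := by
  unfold hammingDist bd
  rw [Finset.card_filter]
  exact Finset.sum_congr rfl (by intro i _; by_cases h : x i = y i <;> simp [h])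

lemma bd_triangle (a b c : Bool) : bd a c ≤ bd a b + bd b c := by revert a b c; decide
lemma bd_maj_ab (a b c : Bool) : bd a (maj a b c) + bd (maj a b c) b = bd a b := by
  revert a b c; decide
lemma bd_maj_bc (a b c : Bool) : bd b (maj a b c) + bd (maj a b c) c = bd b c := by
  revert a b c; decide
lemma bd_maj_ac (a b c : Bool) : bd a (maj a b c) + bd (maj a b c) c = bd a c := by
  revert a b c; decide

lemma bd_maj_unique (a b c p : Bool)
    (h1 : bd a p + bd p b = bd a b) (h2 : bd b p + bd p c = bd b c)
    (h3 : bd a p + bd p c = bd a c) : p = maj a b c := by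
  revert h1 h2 h3; revert a b c p; decide

lemma sum_between_pointwise {n : ℕ} (x y p : Fin n → Bool)
    (h : hammingDist x p + hammingDist p y = hammingDist x y) (i : Fin n) :
    bd (x i) (p i) + bd (p i) (y i) = bd (x i) (y i) := by
  simp only [hamming_eq_sum, ← Finset.sum_add_distrib] at h
  have hle : ∀ j ∈ Finset.univ, bd (x j) (y j) ≤ bd (x j) (p j) + bd (p j) (y j) :=
    fun j _ => bd_triangle _ _ _
  have := (Finset.sum_eq_sum_iff_of_le hle).mp h.symm
  exact (this i (Finset.mem_univ i)).symm

lemma hd_cons {k : ℕ} (b c : Bool) (x y : Fin k → Bool) :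
    hammingDist (Fin.cons b x : Fin (k+1) → Bool) (Fin.cons c y : Fin (k+1) → Bool)
      = bd b c + hammingDist x y := by
  unfold hammingDist bd
  rw [Finset.card_filter, Finset.card_filter, Fin.sum_univ_succ]
  simp only [Fin.cons_zero, Fin.cons_succ]
  congr 1
  by_cases h : b = c <;> simp [h]

/-! ### the invariant -/

def MedClosed {V : Type} {k : ℕ} (f : V → Fin k → Bool) : Prop :=
  ∀ x y z : V, ∃ m, f m = fun i => maj (f x i) (f y i) (f z i)

def Good (V : Type) (G : SimpleGraph V) (k : ℕ) : Prop :=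
  G.Connected ∧ ∃ f : V → Fin k → Bool, IsIsomEmb G k f ∧ MedClosed f ∧
    ∃ e : Fin k → V × V, (∀ i, G.Adj (e i).1 (e i).2) ∧
      ∀ i j, i ≠ j → G.dist (e i).1 (e j).1 + G.dist (e i).2 (e j).2
                   = G.dist (e i).1 (e j).2 + G.dist (e i).2 (e j).1

section median
variable {V : Type} {G : SimpleGraph V} {k : ℕ} {f : V → Fin k → Bool}

lemma hd_maj_ab (x y z : Fin k → Bool) :
    hammingDist x (fun i => maj (x i) (y i) (z i)) +
      hammingDist (fun i => maj (x i) (y i) (z i)) y = hammingDist x y := by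
  simp only [hamming_eq_sum, ← Finset.sum_add_distrib]
  exact Finset.sum_congr rfl fun i _ => bd_maj_ab _ _ _

lemma hd_maj_bc (x y z : Fin k → Bool) :
    hammingDist y (fun i => maj (x i) (y i) (z i)) +
      hammingDist (fun i => maj (x i) (y i) (z i)) z = hammingDist y z := by
  simp only [hamming_eq_sum, ← Finset.sum_add_distrib]
  exact Finset.sum_congr rfl fun i _ => bd_maj_bc _ _ _

lemma hd_maj_ac (x y z : Fin k → Bool) :
    hammingDist x (fun i => maj (x i) (y i) (z i)) +
      hammingDist (fun i => maj (x i) (y i) (z i)) z = hammingDist x z := by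
  simp only [hamming_eq_sum, ← Finset.sum_add_distrib]
  exact Finset.sum_congr rfl fun i _ => bd_maj_ac _ _ _

lemma iso_inj (hconn : G.Connected) (hf : IsIsomEmb G k f) : Function.Injective f := by
  intro a b hab
  have h0 : hammingDist (f a) (f b) = 0 := by rw [hab, hammingDist_self]
  have := hf a b
  rw [h0] at this
  exact (hconn.dist_eq_zero_iff.mp this.symm)

lemma good_median (h : Good V G k) : IsMedianGraph G := by
  obtain ⟨hconn, f, hf, hmed, -⟩ := h
  refine ⟨hconn, fun x y z => ?_⟩
  obtain ⟨m, hm⟩ := hmed x y z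
  have hxy : m ∈ interval G x y := by
    show G.dist x m + G.dist m y = G.dist x y
    rw [← hf, ← hf, ← hf, hm]
    exact hd_maj_ab _ _ _
  have hyz : m ∈ interval G y z := by
    show G.dist y m + G.dist m z = G.dist y z
    rw [← hf, ← hf, ← hf, hm]
    exact hd_maj_bc _ _ _
  have hxz : m ∈ interval G x z := by
    show G.dist x m + G.dist m z = G.dist x z
    rw [← hf, ← hf, ← hf, hm]
    exact hd_maj_ac _ _ _
  refine ⟨m, ⟨⟨hxy, hyz⟩, hxz⟩, ?_⟩
  rintro p ⟨⟨hpxy, hpyz⟩, hpxz⟩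
  apply iso_inj hconn hf
  rw [hm]
  funext i
  have e1 : hammingDist (f x) (f p) + hammingDist (f p) (f y) = hammingDist (f x) (f y) := by
    rw [hf, hf, hf]; exact hpxy
  have e2 : hammingDist (f y) (f p) + hammingDist (f p) (f z) = hammingDist (f y) (f z) := by
    rw [hf, hf, hf]; exact hpyz
  have e3 : hammingDist (f x) (f p) + hammingDist (f p) (f z) = hammingDist (f x) (f z) := by
    rw [hf, hf, hf]; exact hpxz
  exact bd_maj_unique _ _ _ _ (sum_between_pointwise _ _ _ e1 i)
    (sum_between_pointwise _ _ _ e2 i) (sum_between_pointwise _ _ _ e3 i)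

end median

lemma bd_edge_ne (a b x y : Bool) (hab : a ≠ b) (hxy : x ≠ y) :
    bd a x + bd b y ≠ bd a y + bd b x := by
  revert a b x y; decide

lemma good_idim {V : Type} {G : SimpleGraph V} {k : ℕ} (h : Good V G k) : idim G = k := by
  obtain ⟨hconn, f, hf, -, e, hadj, hΘ⟩ := h
  have hkmem : k ∈ {n | ∃ f : V → Fin n → Bool, IsIsomEmb G n f} := ⟨f, hf⟩
  apply le_antisymm
  · exact Nat.sInf_le hkmem
  · apply le_csInf ⟨k, hkmem⟩
    rintro n ⟨g, hg⟩
    have hone : ∀ i : Fin k, ∃ γ : Fin n, ∀ l, g (e i).1 l ≠ g (e i).2 l ↔ l = γ := by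
      intro i
      have h1 : hammingDist (g (e i).1) (g (e i).2) = 1 := by
        rw [hg]; exact dist_eq_one_iff_adj.mpr (hadj i)
      rw [hammingDist, Finset.card_eq_one] at h1
      obtain ⟨γ, hγ⟩ := h1
      refine ⟨γ, fun l => ?_⟩
      constructor
      · intro hl
        have : l ∈ ({l' | g (e i).1 l' ≠ g (e i).2 l'} : Finset (Fin n)) := by
          simp [hl]
        rw [hγ] at this
        simpa using this
      · intro hl
        subst hl
        have : l ∈ ({l' | g (e i).1 l' ≠ g (e i).2 l'} : Finset (Fin n)) := by
          rw [hγ]; simp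
        simpa using this
    choose c hc using hone
    have hinj : Function.Injective c := by
      intro i j hij
      by_contra hne
      set γ := c i with hγdef
      have hAB : ∀ l, g (e i).1 l ≠ g (e i).2 l ↔ l = γ := hc i
      have hXY : ∀ l, g (e j).1 l ≠ g (e j).2 l ↔ l = γ := fun l =>
        (hc j l).trans (by rw [hij])
      have hsum : hammingDist (g (e i).1) (g (e j).1) + hammingDist (g (e i).2) (g (e j).2)
          = hammingDist (g (e i).1) (g (e j).2) + hammingDist (g (e i).2) (g (e j).1) := by
        rw [hg, hg, hg, hg]; exact hΘ i j hne
      simp only [hamming_eq_sum, ← Finset.sum_add_distrib] at hsum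
      set F := fun l => bd (g (e i).1 l) (g (e j).1 l) + bd (g (e i).2 l) (g (e j).2 l)
      set F' := fun l => bd (g (e i).1 l) (g (e j).2 l) + bd (g (e i).2 l) (g (e j).1 l)
      have hrest : ∑ l ∈ Finset.univ.erase γ, F l = ∑ l ∈ Finset.univ.erase γ, F' l := by
        refine Finset.sum_congr rfl fun l hl => ?_
        have hlγ : l ≠ γ := (Finset.mem_erase.mp hl).1
        have h1 : g (e i).1 l = g (e i).2 l := by
          by_contra hcon; exact hlγ ((hAB l).mp hcon)
        have h2 : g (e j).1 l = g (e j).2 l := by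
          by_contra hcon; exact hlγ ((hXY l).mp hcon)
        simp only [F, F', h1, h2]
      rw [← Finset.add_sum_erase _ F (Finset.mem_univ γ),
        ← Finset.add_sum_erase _ F' (Finset.mem_univ γ), hrest] at hsum
      exact bd_edge_ne _ _ _ _ ((hAB γ).mpr rfl) ((hXY γ).mpr rfl)
        (Nat.add_right_cancel hsum)
    calc k = Fintype.card (Fin k) := by simp
      _ ≤ Fintype.card (Fin n) := Fintype.card_le_of_injective c hinj
      _ = n := by simp

end PeriphAux

namespace PeriphAux

section expand
variable {V : Type} {G : SimpleGraph V} {S : Set V} {k : ℕ}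

/-- last-layer bit -/
def qb : (V ⊕ ↥S) → Bool := Sum.elim (fun _ => false) (fun _ => true)

lemma good_expand (h : Good V G k) (hne : S.Nonempty)
    (hiso : IsIsometricSet G S) (hconv : IsConvexSet G S) :
    Good (V ⊕ ↥S) (periphExpansion G S) (k + 1) := by
  obtain ⟨hconn, f, hf, hmed, e, hadj, hΘ⟩ := h
  obtain ⟨s0, hs0⟩ := hne
  refine ⟨pe_connected hconn, ?_⟩
  set f' : (V ⊕ ↥S) → Fin (k + 1) → Bool :=
    fun a => Fin.cons (qb a) (f (pproj a)) with hf'def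
  have hiso' : IsIsomEmb (periphExpansion G S) (k + 1) f' := by
    rintro (u | s) (v | t)
    · rw [hf'def]
      simp only [qb, pproj, Sum.elim_inl, id_eq]
      rw [hd_cons, pe_dist_ll hconn, hf]
      simp [bd]
    · rw [hf'def]
      simp only [qb, pproj, Sum.elim_inl, Sum.elim_inr, id_eq]
      rw [hd_cons, pe_dist_lr hconn, hf]
      simp [bd]; omega
    · rw [hf'def]
      simp only [qb, pproj, Sum.elim_inl, Sum.elim_inr, id_eq]
      rw [hd_cons, pe_dist_rl hconn, hf]
      simp only [bd, if_neg (by simp : (true : Bool) ≠ false)]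
      rw [SimpleGraph.dist_comm]
      omega
    · rw [hf'def]
      simp only [qb, pproj, Sum.elim_inr]
      rw [hd_cons, pe_dist_rr hconn hiso, hf]
      simp [bd]
  refine ⟨f', hiso', ?_, ?_⟩
  · -- median closure
    intro x y z
    obtain ⟨m0, hm0⟩ := hmed (pproj x) (pproj y) (pproj z)
    have hRHS : (fun i => maj (f' x i) (f' y i) (f' z i)) =
        Fin.cons (maj (qb x) (qb y) (qb z))
          (fun i => maj (f (pproj x) i) (f (pproj y) i) (f (pproj z) i)) := by
      funext i
      refine Fin.cases ?_ ?_ i <;> simp [hf'def]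
    rw [hRHS]
    -- the three interval facts for m0
    have key_ab : G.dist (pproj x) m0 + G.dist m0 (pproj y) =
        G.dist (pproj x) (pproj y) := by
      rw [← hf, ← hf, ← hf, hm0]; exact hd_maj_ab _ _ _
    have key_bc : G.dist (pproj y) m0 + G.dist m0 (pproj z) =
        G.dist (pproj y) (pproj z) := by
      rw [← hf, ← hf, ← hf, hm0]; exact hd_maj_bc _ _ _
    have key_ac : G.dist (pproj x) m0 + G.dist m0 (pproj z) =
        G.dist (pproj x) (pproj z) := by
      rw [← hf, ← hf, ← hf, hm0]; exact hd_maj_ac _ _ _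
    rcases hqb : maj (qb x) (qb y) (qb z) with _ | _
    · -- bottom layer
      refine ⟨Sum.inl m0, ?_⟩
      rw [hf'def]
      simp only [qb, pproj, Sum.elim_inl, id_eq]
      rw [hm0]
      rfl
    · -- top layer : at least two of x, y, z are in the inr layer
      have hm0S : m0 ∈ S := by
        rcases x with u | s <;> rcases y with v | t <;> rcases z with w | r <;>
          simp only [qb, Sum.elim_inl, Sum.elim_inr, maj, Bool.and_false, Bool.and_true,
            Bool.false_and, Bool.true_and, Bool.or_false, Bool.false_or, Bool.and_self,
            Bool.or_self] at hqb
        · exact absurd hqb (by simp)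
        · exact absurd hqb (by simp)
        · exact absurd hqb (by simp)
        · exact hconv t.1 t.2 r.1 r.2 m0 key_bc
        · exact absurd hqb (by simp)
        · exact hconv s.1 s.2 r.1 r.2 m0 key_ac
        · exact hconv s.1 s.2 t.1 t.2 m0 key_ab
        · exact hconv s.1 s.2 t.1 t.2 m0 key_ab
      refine ⟨Sum.inr ⟨m0, hm0S⟩, ?_⟩
      rw [hf'def]
      simp only [qb, pproj, Sum.elim_inr]
      rw [hm0]
      rfl
  · -- the k+1 pairwise non-Θ edges
    refine ⟨Fin.cons (Sum.inl s0, Sum.inr ⟨s0, hs0⟩)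
      (fun i => (Sum.inl (e i).1, Sum.inl (e i).2)), ?_, ?_⟩
    · intro i
      refine Fin.cases ?_ ?_ i
      · simp
      · intro j
        simp only [Fin.cons_succ]
        exact pe_adj_ll.mpr (hadj j)
    · intro i j
      induction i using Fin.cases with
      | zero =>
        induction j using Fin.cases with
        | zero => intro hij; exact absurd rfl hij
        | succ j' =>
          intro _
          simp only [Fin.cons_zero, Fin.cons_succ]
          rw [pe_dist_ll hconn, pe_dist_rl hconn, pe_dist_ll hconn, pe_dist_rl hconn]
          have c1 : G.dist (e j').1 ((⟨s0, hs0⟩ : ↥S) : V) = G.dist s0 (e j').1 :=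
            SimpleGraph.dist_comm
          have c2 : G.dist (e j').2 ((⟨s0, hs0⟩ : ↥S) : V) = G.dist s0 (e j').2 :=
            SimpleGraph.dist_comm
          omega
      | succ i' =>
        induction j using Fin.cases with
        | zero =>
          intro _
          simp only [Fin.cons_zero, Fin.cons_succ]
          rw [pe_dist_ll hconn, pe_dist_lr hconn, pe_dist_ll hconn, pe_dist_lr hconn]
          have c1 : G.dist (e i').1 ((⟨s0, hs0⟩ : ↥S) : V) = G.dist (e i').1 s0 := rfl
          have c2 : G.dist (e i').2 ((⟨s0, hs0⟩ : ↥S) : V) = G.dist (e i').2 s0 := rfl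
          omega
        | succ j' =>
          intro hij
          simp only [Fin.cons_succ]
          rw [pe_dist_ll hconn, pe_dist_ll hconn, pe_dist_ll hconn, pe_dist_ll hconn]
          exact hΘ i' j' (fun hcon => hij (by rw [hcon]))

end expand

lemma good_single : Good PUnit ⊥ 0 := by
  refine ⟨?_, fun _ i => i.elim0, ?_, fun x y z => ⟨x, funext fun i => i.elim0⟩,
    fun i => i.elim0, fun i => i.elim0, fun i j _ => i.elim0⟩
  · rw [connected_iff]
    exact ⟨fun a b => by rw [Subsingleton.elim a b], ⟨PUnit.unit⟩⟩
  · intro u v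
    rw [Subsingleton.elim u v, hammingDist_self, SimpleGraph.dist_self]

lemma built_good {V : Type} {G : SimpleGraph V}
    (h : BuiltByPeripheralConvexExpansions V G) : ∃ k, Good V G k := by
  induction h with
  | single => exact ⟨0, good_single⟩
  | expand S hne hiso hconv hG ih =>
    obtain ⟨k, hk⟩ := ih
    exact ⟨k + 1, good_expand hk hne hiso hconv⟩

end PeriphAux

/-- A graph obtained from a single vertex by a sequence of peripheral convex expansions
is a median graph, and each peripheral convex expansion increases the number of
Θ-classes (the isometric dimension) by exactly one. -/
theorem stmt17 :
    (∀ (V : Type) (G : SimpleGraph V),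
      BuiltByPeripheralConvexExpansions V G → IsMedianGraph G) ∧
    (∀ (V : Type) (G : SimpleGraph V) (S : Set V), S.Nonempty →
      IsIsometricSet G S → IsConvexSet G S →
      BuiltByPeripheralConvexExpansions V G →
      idim (periphExpansion G S) = idim G + 1) := by
  constructor
  · intro V G hb
    obtain ⟨k, hk⟩ := PeriphAux.built_good hb
    exact PeriphAux.good_median hk
  · intro V G S hne hiso hconv hb
    obtain ⟨k, hk⟩ := PeriphAux.built_good hb
    rw [PeriphAux.good_idim hk,
      PeriphAux.good_idim (PeriphAux.good_expand hk hne hiso hconv)]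
end
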